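/- arXiv:2104.09093 — 5 statements merged into one kernel-verified Lean document; each statement's English description precedes it below -/
import Mathlib

section
/- Let ε^op ∈ ℝ^M be defined by ε^op_m = (2^{-b_tot} ∏_{m'=1}^M ζ_{m'} √(p_{m'}/p_m))^{1/M}. Then ε^op is feasible for the pilot-distortion minimization problem and satisfies the ADC bit budget constraint with equality, i.e. ∑_{m=1}^M log₂(ζ_m/ε^op_m) = b_tot, and for every feasible ε (i.e. every ε ∈ ℝ^M with ε_m > 0 for all m and ∑_{m=1}^M log₂(ζ_m/ε_m) ≤ b_tot) one has ∑_{m=1}^M p_m (ε^op_m)² ≤ ∑_{m=1}^M p_m ε_m². -/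
open Finset

/-- The closed-form allocation
`ε^op_m = (2^{-b_tot} ∏_{m'} ζ_{m'} √(p_{m'}/p_m))^{1/M}` is feasible for the
pilot-distortion minimization problem, satisfies the ADC bit budget constraint
with equality, and achieves a pilot distortion no larger than that of any
feasible allocation. -/
theorem pilot_distortion_optimal_allocation
    (M : ℕ) (hM : 1 ≤ M)
    (p ζ : Fin M → ℝ) (hp : ∀ m, 0 < p m) (hζ : ∀ m, 0 < ζ m)
    (btot : ℝ)
    (εop : Fin M → ℝ)
    (hεop : ∀ m, εop m =
      ((2 : ℝ) ^ (-btot) * ∏ m', ζ m' * Real.sqrt (p m' / p m)) ^ ((M : ℝ)⁻¹)) :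
    (∀ m, 0 < εop m) ∧
    (∑ m, Real.logb 2 (ζ m / εop m) = btot) ∧
    (∀ ε : Fin M → ℝ, (∀ m, 0 < ε m) →
      (∑ m, Real.logb 2 (ζ m / ε m) ≤ btot) →
      ∑ m, p m * (εop m) ^ 2 ≤ ∑ m, p m * (ε m) ^ 2) := by
  have hMne : M ≠ 0 := Nat.one_le_iff_ne_zero.mp hM
  set C : ℝ := (2 : ℝ) ^ (-btot) * ∏ m', ζ m' * Real.sqrt (p m') with hC
  have hCpos : 0 < C := by
    apply mul_pos (Real.rpow_pos_of_pos two_pos _)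
    exact Finset.prod_pos fun m _ => mul_pos (hζ m) (Real.sqrt_pos.mpr (hp m))
  -- closed form: εop m = C^(1/M) / √(p m)
  have hkey : ∀ m, εop m = C ^ ((M : ℝ)⁻¹) / Real.sqrt (p m) := by
    intro m
    have hsm : 0 < Real.sqrt (p m) := Real.sqrt_pos.mpr (hp m)
    have hA : (2 : ℝ) ^ (-btot) * ∏ m', ζ m' * Real.sqrt (p m' / p m)
        = C / (Real.sqrt (p m)) ^ M := by
      have : ∀ m', ζ m' * Real.sqrt (p m' / p m)
          = (ζ m' * Real.sqrt (p m')) * (Real.sqrt (p m))⁻¹ := by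
        intro m'
        rw [Real.sqrt_div (hp m').le]
        ring
      rw [Finset.prod_congr rfl fun m' _ => this m', Finset.prod_mul_distrib,
        Finset.prod_const, Finset.card_univ, Fintype.card_fin]
      field_simp [hC]
      rw [one_div, inv_pow, mul_assoc, inv_mul_cancel₀ (pow_ne_zero _ hsm.ne'), mul_one, ← hC]
    rw [hεop m, hA, Real.div_rpow hCpos.le (by positivity),
      Real.pow_rpow_inv_natCast hsm.le hMne]
  have hεoppos : ∀ m, 0 < εop m := by
    intro m
    rw [hkey m]
    exact div_pos (Real.rpow_pos_of_pos hCpos _) (Real.sqrt_pos.mpr (hp m))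
  -- product of εop
  have hprod : ∏ m, εop m = (2 : ℝ) ^ (-btot) * ∏ m', ζ m' := by
    have : ∏ m, εop m = C ^ ((M : ℝ)⁻¹ * M) / ∏ m, Real.sqrt (p m) := by
      rw [Finset.prod_congr rfl fun m _ => hkey m, Finset.prod_div_distrib,
        Finset.prod_const, Finset.card_univ, Fintype.card_fin,
        ← Real.rpow_natCast (C ^ ((M : ℝ)⁻¹)) M, ← Real.rpow_mul hCpos.le]
    rw [this, inv_mul_cancel₀ (by exact_mod_cast hMne), Real.rpow_one, hC,
      Finset.prod_mul_distrib]
    have hps : 0 < ∏ m, Real.sqrt (p m) :=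
      Finset.prod_pos fun m _ => Real.sqrt_pos.mpr (hp m)
    field_simp
  -- equality in the constraint
  have hprodζε : ∏ m, ζ m / εop m = (2 : ℝ) ^ btot := by
    rw [Finset.prod_div_distrib, hprod]
    have hpζ : 0 < ∏ m', ζ m' := Finset.prod_pos fun m _ => hζ m
    rw [div_eq_iff (ne_of_gt (mul_pos (Real.rpow_pos_of_pos two_pos _) hpζ)),
      ← mul_assoc, ← Real.rpow_add two_pos]
    simp
  have heq : ∑ m, Real.logb 2 (ζ m / εop m) = btot := by
    rw [← Real.logb_prod _ _ (fun m _ => (div_pos (hζ m) (hεoppos m)).ne'), hprodζε,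
      Real.logb_rpow two_pos (by norm_num)]
  refine ⟨hεoppos, heq, ?_⟩
  -- optimality
  intro ε hε hfeas
  set K : ℝ := (C ^ ((M : ℝ)⁻¹)) ^ 2 with hK
  have hterm : ∀ m, p m * (εop m) ^ 2 = K := by
    intro m
    rw [hkey m, div_pow, Real.sq_sqrt (hp m).le, hK,
      mul_div_cancel₀ _ (hp m).ne']
  have hlhs : ∑ m, p m * (εop m) ^ 2 = M * K := by
    rw [Finset.sum_congr rfl fun m _ => hterm m, Finset.sum_const,
      Finset.card_univ, Fintype.card_fin, nsmul_eq_mul]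
  rw [hlhs]
  -- from feasibility: ∏ ε ≥ 2^(-btot) ∏ ζ
  have hfeas' : ∏ m, ζ m / ε m ≤ (2 : ℝ) ^ btot := by
    have hppos : 0 < ∏ m, ζ m / ε m :=
      Finset.prod_pos fun m _ => div_pos (hζ m) (hε m)
    refine (Real.logb_le_iff_le_rpow one_lt_two hppos).mp ?_
    rw [Real.logb_prod _ _ (fun m _ => (div_pos (hζ m) (hε m)).ne')]
    exact hfeas
  have hprodε : (2 : ℝ) ^ (-btot) * ∏ m', ζ m' ≤ ∏ m, ε m := by
    have hεp : 0 < ∏ m, ε m := Finset.prod_pos fun m _ => hε m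
    rw [Finset.prod_div_distrib, div_le_iff₀ hεp] at hfeas'
    calc (2:ℝ) ^ (-btot) * ∏ m', ζ m' ≤ (2:ℝ)^(-btot) * ((2:ℝ)^btot * ∏ m, ε m) :=
          mul_le_mul_of_nonneg_left hfeas' (by positivity)
      _ = ∏ m, ε m := by
          rw [← mul_assoc, ← Real.rpow_add two_pos]
          simp
  -- product of z m := p m * ε m ^ 2 is ≥ C ^ 2
  have hCsq : C ^ 2 ≤ ∏ m, p m * (ε m) ^ 2 := by
    have hz : ∏ m, p m * (ε m) ^ 2 = (∏ m, Real.sqrt (p m) * ε m) ^ 2 := by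
      rw [← Finset.prod_pow]
      exact Finset.prod_congr rfl fun m _ => by
        rw [mul_pow, Real.sq_sqrt (hp m).le]
    rw [hz]
    have h1 : C ≤ ∏ m, Real.sqrt (p m) * ε m := by
      have : ∏ m, Real.sqrt (p m) * ε m = (∏ m, Real.sqrt (p m)) * ∏ m, ε m :=
        Finset.prod_mul_distrib
      rw [this]
      calc C = (∏ m, Real.sqrt (p m)) * ((2 : ℝ) ^ (-btot) * ∏ m', ζ m') := by
            rw [hC, Finset.prod_mul_distrib]; ring
        _ ≤ (∏ m, Real.sqrt (p m)) * ∏ m, ε m := by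
            apply mul_le_mul_of_nonneg_left hprodε
            exact (Finset.prod_pos fun m _ => Real.sqrt_pos.mpr (hp m)).le
    exact pow_le_pow_left₀ hCpos.le h1 2
  -- AM-GM
  have hAMGM : (∏ m, (p m * (ε m) ^ 2) ^ ((M : ℝ)⁻¹)) ≤
      ∑ m, (M : ℝ)⁻¹ * (p m * (ε m) ^ 2) := by
    apply Real.geom_mean_le_arith_mean_weighted
    · intro i _; positivity
    · rw [Finset.sum_const, Finset.card_univ, Fintype.card_fin, nsmul_eq_mul]
      field_simp
    · intro i _; exact (mul_pos (hp i) (pow_pos (hε i) 2)).le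
  have hgm : K ≤ ∏ m, (p m * (ε m) ^ 2) ^ ((M : ℝ)⁻¹) := by
    rw [Real.finset_prod_rpow _ _ (fun m _ => (mul_pos (hp m) (pow_pos (hε m) 2)).le)]
    have h1 : K = (C ^ 2) ^ ((M : ℝ)⁻¹) := by
      rw [hK, ← Real.rpow_natCast (C ^ ((M : ℝ)⁻¹)) 2, ← Real.rpow_mul hCpos.le,
        ← Real.rpow_natCast C 2, ← Real.rpow_mul hCpos.le]
      ring_nf
    rw [h1]
    exact Real.rpow_le_rpow (by positivity) hCsq (by positivity)
  calc (M : ℝ) * K ≤ (M : ℝ) * ∏ m, (p m * (ε m) ^ 2) ^ ((M : ℝ)⁻¹) := by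
        apply mul_le_mul_of_nonneg_left hgm (by positivity)
    _ ≤ (M : ℝ) * ∑ m, (M : ℝ)⁻¹ * (p m * (ε m) ^ 2) := by
        apply mul_le_mul_of_nonneg_left hAMGM (by positivity)
    _ = ∑ m, p m * (ε m) ^ 2 := by
        rw [← Finset.mul_sum, ← mul_assoc,
          mul_inv_cancel₀ (by exact_mod_cast hMne : (M:ℝ) ≠ 0), one_mul]
end

section
/- Let ε^op ∈ ℝ^M be defined by ε^op_m = (2^{-b_tot} ∏_{m'=1}^M ζ_{m'} √(p_{m'}/p_m))^{1/M}. Then ε^op is the unique minimizer of the pilot-distortion minimization problem: for every feasible ε with ε ≠ ε^op one has ∑_{m=1}^M p_m (ε^op_m)² < ∑_{m=1}^M p_m ε_m². -/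
open Finset

private lemma tangent_le' {K x : ℝ} (hK : 0 < K) (hx : 0 < x) :
    K * (1 + (Real.log x - Real.log K)) ≤ x := by
  have h := Real.add_one_le_exp (Real.log x - Real.log K)
  have hexp : K * Real.exp (Real.log x - Real.log K) = x := by
    rw [Real.exp_sub, Real.exp_log hx, Real.exp_log hK]
    field_simp
  nlinarith [mul_le_mul_of_nonneg_left h hK.le]

private lemma tangent_lt' {K x : ℝ} (hK : 0 < K) (hx : 0 < x) (hne : x ≠ K) :
    K * (1 + (Real.log x - Real.log K)) < x := by
  have hlog : Real.log x - Real.log K ≠ 0 := by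
    refine sub_ne_zero.mpr fun h => hne ?_
    exact Real.log_injOn_pos (Set.mem_Ioi.2 hx) (Set.mem_Ioi.2 hK) h
  have h := Real.add_one_lt_exp hlog
  have hexp : K * Real.exp (Real.log x - Real.log K) = x := by
    rw [Real.exp_sub, Real.exp_log hx, Real.exp_log hK]
    field_simp
  nlinarith [mul_lt_mul_of_pos_left h hK]

/-- The closed-form allocation
`ε^op_m = (2^{-b_tot} ∏_{m'} ζ_{m'} √(p_{m'}/p_m))^{1/M}` is the *unique*
minimizer of the pilot-distortion minimization problem: every feasible
allocation `ε ≠ ε^op` incurs strictly larger pilot distortion. -/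
theorem pilot_distortion_unique_minimizer
    (M : ℕ) (hM : 1 ≤ M)
    (p ζ : Fin M → ℝ) (hp : ∀ m, 0 < p m) (hζ : ∀ m, 0 < ζ m)
    (btot : ℝ)
    (εop : Fin M → ℝ)
    (hεop : ∀ m, εop m =
      ((2 : ℝ) ^ (-btot) * ∏ m', ζ m' * Real.sqrt (p m' / p m)) ^ ((M : ℝ)⁻¹)) :
    ∀ ε : Fin M → ℝ, (∀ m, 0 < ε m) →
      (∑ m, Real.logb 2 (ζ m / ε m) ≤ btot) →
      ε ≠ εop →
      ∑ m, p m * (εop m) ^ 2 < ∑ m, p m * (ε m) ^ 2 := by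
  intro ε hε hfeas hne
  have hM0 : (M : ℝ) ≠ 0 := Nat.cast_ne_zero.mpr (by omega)
  set C : ℝ := (2 : ℝ) ^ (-btot) * ∏ m', ζ m' * Real.sqrt (p m') with hCdef
  have hrpow2 : (0 : ℝ) < (2 : ℝ) ^ (-btot) := Real.rpow_pos_of_pos two_pos _
  have hprodpos : (0 : ℝ) < ∏ m', ζ m' * Real.sqrt (p m') :=
    Finset.prod_pos fun m _ => mul_pos (hζ m) (Real.sqrt_pos.2 (hp m))
  have hC : 0 < C := mul_pos hrpow2 hprodpos
  set D : ℝ := C ^ ((M : ℝ)⁻¹) with hDdef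
  have hD : 0 < D := Real.rpow_pos_of_pos hC _
  set K : ℝ := D ^ 2 with hKdef
  have hK : 0 < K := by positivity
  -- closed form of εop
  have hεop' : ∀ m, εop m = D / Real.sqrt (p m) := by
    intro m
    have hs : (0 : ℝ) < Real.sqrt (p m) := Real.sqrt_pos.2 (hp m)
    have hprod : (∏ m', ζ m' * Real.sqrt (p m' / p m))
        = (∏ m', ζ m' * Real.sqrt (p m')) * ((Real.sqrt (p m))⁻¹) ^ M := by
      calc (∏ m', ζ m' * Real.sqrt (p m' / p m))
          = ∏ m', (ζ m' * Real.sqrt (p m')) * (Real.sqrt (p m))⁻¹ := by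
            refine Finset.prod_congr rfl fun m' _ => ?_
            rw [Real.sqrt_div (hp m').le]
            ring
        _ = (∏ m', ζ m' * Real.sqrt (p m')) * ((Real.sqrt (p m))⁻¹) ^ M := by
            rw [Finset.prod_mul_distrib, Finset.prod_const, Finset.card_univ,
              Fintype.card_fin]
    have hbase : (2 : ℝ) ^ (-btot) * ∏ m', ζ m' * Real.sqrt (p m' / p m)
        = C * ((Real.sqrt (p m))⁻¹) ^ M := by
      rw [hprod, hCdef]; ring
    rw [hεop m, hbase, Real.mul_rpow hC.le (by positivity)]
    have : (((Real.sqrt (p m))⁻¹) ^ M : ℝ) ^ ((M : ℝ)⁻¹) = (Real.sqrt (p m))⁻¹ := by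
      rw [← Real.rpow_natCast ((Real.sqrt (p m))⁻¹) M, ← Real.rpow_mul (by positivity),
        mul_inv_cancel₀ hM0, Real.rpow_one]
    rw [this, hDdef, div_eq_mul_inv]
  have hεoppos : ∀ m, 0 < εop m := by
    intro m
    rw [hεop' m]
    exact div_pos hD (Real.sqrt_pos.2 (hp m))
  have hKop : ∀ m, p m * (εop m) ^ 2 = K := by
    intro m
    rw [hεop' m, div_pow, Real.sq_sqrt (hp m).le, hKdef, mul_comm,
      div_mul_cancel₀ _ (hp m).ne']
  -- constraint in log form
  have hlog2 : (0 : ℝ) < Real.log 2 := Real.log_pos one_lt_two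
  have h1 : ∑ m, (Real.log (ζ m) - Real.log (ε m)) ≤ btot * Real.log 2 := by
    have heq : ∀ m : Fin M, Real.logb 2 (ζ m / ε m)
        = (Real.log (ζ m) - Real.log (ε m)) / Real.log 2 := by
      intro m
      rw [Real.logb, Real.log_div (ne_of_gt (hζ m)) (ne_of_gt (hε m))]
    rw [Finset.sum_congr rfl (fun m _ => heq m), ← Finset.sum_div] at hfeas
    exact (div_le_iff₀ hlog2).mp hfeas
  -- log C and log K
  have hlogC : Real.log C = -btot * Real.log 2
      + ∑ m, (Real.log (ζ m) + Real.log (p m) / 2) := by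
    rw [hCdef, Real.log_mul (ne_of_gt hrpow2) (ne_of_gt hprodpos),
      Real.log_rpow two_pos,
      Real.log_prod (fun m _ => ne_of_gt (mul_pos (hζ m) (Real.sqrt_pos.2 (hp m))))]
    congr 1
    refine Finset.sum_congr rfl fun m _ => ?_
    rw [Real.log_mul (ne_of_gt (hζ m)) (ne_of_gt (Real.sqrt_pos.2 (hp m))),
      Real.log_sqrt (hp m).le]
  have hMlogK : (M : ℝ) * Real.log K = 2 * Real.log C := by
    rw [hKdef, Real.log_pow, hDdef, Real.log_rpow hC]
    push_cast
    field_simp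
  -- the sum of logs is at least M log K
  have hsum_ge : (M : ℝ) * Real.log K ≤ ∑ m, Real.log (p m * ε m ^ 2) := by
    have hexpand : ∑ m, Real.log (p m * ε m ^ 2)
        = ∑ m, Real.log (p m) + 2 * ∑ m, Real.log (ε m) := by
      have : ∀ m : Fin M, Real.log (p m * ε m ^ 2)
          = Real.log (p m) + 2 * Real.log (ε m) := by
        intro m
        rw [Real.log_mul (ne_of_gt (hp m)) (pow_ne_zero 2 (hε m).ne'), Real.log_pow]
        push_cast; ring
      rw [Finset.sum_congr rfl (fun m _ => this m), Finset.sum_add_distrib,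
        ← Finset.mul_sum]
    have hsplit : ∑ m, (Real.log (ζ m) + Real.log (p m) / 2)
        = ∑ m, Real.log (ζ m) + (∑ m, Real.log (p m)) / 2 := by
      rw [Finset.sum_add_distrib, Finset.sum_div]
    have hsub : ∑ m, (Real.log (ζ m) - Real.log (ε m))
        = ∑ m, Real.log (ζ m) - ∑ m, Real.log (ε m) := Finset.sum_sub_distrib _ _
    rw [hMlogK, hlogC, hexpand, hsplit]
    rw [hsub] at h1
    linarith
  -- pointwise tangent bounds
  have hle : ∀ m ∈ Finset.univ,
      K * (1 + (Real.log (p m * ε m ^ 2) - Real.log K)) ≤ p m * ε m ^ 2 :=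
    fun m _ => tangent_le' hK (mul_pos (hp m) (pow_pos (hε m) 2))
  obtain ⟨m0, hm0⟩ := Function.ne_iff.mp hne
  have hg0 : p m0 * ε m0 ^ 2 ≠ K := by
    intro h
    apply hm0
    have h2 : ε m0 ^ 2 = εop m0 ^ 2 := by
      have hk := hKop m0
      have := mul_left_cancel₀ (ne_of_gt (hp m0)) (h.trans hk.symm)
      exact this
    nlinarith [hε m0, hεoppos m0]
  have hlt : K * (1 + (Real.log (p m0 * ε m0 ^ 2) - Real.log K)) < p m0 * ε m0 ^ 2 :=
    tangent_lt' hK (mul_pos (hp m0) (pow_pos (hε m0) 2)) hg0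
  have hsum_lt : ∑ m, K * (1 + (Real.log (p m * ε m ^ 2) - Real.log K))
      < ∑ m, p m * ε m ^ 2 :=
    Finset.sum_lt_sum hle ⟨m0, Finset.mem_univ m0, hlt⟩
  have hexpand2 : ∑ m, K * (1 + (Real.log (p m * ε m ^ 2) - Real.log K))
      = (M : ℝ) * K + K * ((∑ m, Real.log (p m * ε m ^ 2)) - (M : ℝ) * Real.log K) := by
    simp only [mul_add, mul_sub, mul_one, Finset.sum_add_distrib, Finset.sum_sub_distrib,
      Finset.sum_const, Finset.card_univ, Fintype.card_fin, nsmul_eq_mul, ← Finset.mul_sum]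
    ring
  have hMK : ∑ m, p m * (εop m) ^ 2 = (M : ℝ) * K := by
    rw [Finset.sum_congr rfl (fun m _ => hKop m), Finset.sum_const, Finset.card_univ,
      Fintype.card_fin, nsmul_eq_mul]
  calc ∑ m, p m * (εop m) ^ 2 = (M : ℝ) * K := hMK
    _ ≤ (M : ℝ) * K + K * ((∑ m, Real.log (p m * ε m ^ 2)) - (M : ℝ) * Real.log K) :=
        le_add_of_nonneg_right (mul_nonneg hK.le (by linarith))
    _ = ∑ m, K * (1 + (Real.log (p m * ε m ^ 2) - Real.log K)) := hexpand2.symm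
    _ < ∑ m, p m * ε m ^ 2 := hsum_lt
end

section
/- Let R ∈ ℂ^{M×M} be Hermitian positive semidefinite with positive-semidefinite square root R^{1/2}, set h = R^{1/2} g, and let A ∈ ℂ^{M×M} be arbitrary. Let a, b ∈ ℝ^M, D_a = diag(a), D_b = diag(b), D_h = diag(|h_1|²,…,|h_M|²), and D_R = diag([R]_{11},…,[R]_{MM}). Then E[tr(D_a D_h A D_b D_h A^H)] = tr(D_a D_R A D_b D_R A^H) + ∑_{m=1}^M ∑_{m'=1}^M a_m b_{m'} |[A]_{m m'}|² |[R]_{m m'}|². -/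
open MeasureTheory ProbabilityTheory Matrix
open scoped ENNReal
noncomputable section
variable {Ω : Type*} [MeasurableSpace Ω] {μ : Measure Ω}

lemma memℒp_conj' {f : Ω → ℂ} {p : ℝ≥0∞} (hf : MemLp f p μ) :
    MemLp (fun ω => starRingEnd ℂ (f ω)) p μ :=
  ⟨RCLike.continuous_conj.comp_aestronglyMeasurable hf.1, by
    simpa using (eLpNorm_conj f p μ) ▸ hf.2⟩

lemma memℒp_two_mul' {f g : Ω → ℂ} (hf : MemLp f 4 μ) (hg : MemLp g 4 μ) :
    MemLp (fun ω => f ω * g ω) 2 μ := by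
  have := hf.smul (φ := g) hg (p := 4) (r := 2) (hpqr := ⟨Eq.symm (by
    rw [show (2:ℝ≥0∞)⁻¹ = 4⁻¹ + 4⁻¹ from by
      rw [← two_mul, show (4:ℝ≥0∞)=2*2 from by norm_num,
        ENNReal.mul_inv (Or.inl two_ne_zero) (Or.inl (by norm_num)), ← mul_assoc,
        ENNReal.mul_inv_cancel two_ne_zero (by norm_num), one_mul]])⟩)
  simpa [smul_eq_mul, mul_comm, Pi.mul_def] using this

lemma integrable_mul_two {f g : Ω → ℂ} (hf : MemLp f 2 μ) (hg : MemLp g 2 μ) :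
    Integrable (fun ω => f ω * g ω) μ := by
  have := hf.smul (φ := g) hg (p := 2) (r := 1) (hpqr := ⟨by
    rw [inv_one]; exact ENNReal.inv_two_add_inv_two⟩)
  exact memLp_one_iff_integrable.mp (by simpa [smul_eq_mul, mul_comm, Pi.mul_def] using this)

lemma memℒp_two_of_four [IsFiniteMeasure μ] {f : Ω → ℂ} (h : MemLp f 4 μ) : MemLp f 2 μ :=
  h.mono_exponent (by norm_num)

lemma integrable_pair' [IsFiniteMeasure μ] {f1 f2 : Ω → ℂ}
    (h1 : MemLp f1 4 μ) (h2 : MemLp f2 4 μ) : Integrable (fun ω => f1 ω * f2 ω) μ :=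
  integrable_mul_two (memℒp_two_of_four h1) (memℒp_two_of_four h2)

lemma integrable_triple' [IsFiniteMeasure μ] {f1 f2 f3 : Ω → ℂ}
    (h1 : MemLp f1 4 μ) (h2 : MemLp f2 4 μ) (h3 : MemLp f3 4 μ) :
    Integrable (fun ω => f1 ω * f2 ω * f3 ω) μ :=
  integrable_mul_two (memℒp_two_mul' h1 h2) (memℒp_two_of_four h3)

lemma integrable_quad' [IsFiniteMeasure μ] {f1 f2 f3 f4 : Ω → ℂ}
    (h1 : MemLp f1 4 μ) (h2 : MemLp f2 4 μ) (h3 : MemLp f3 4 μ) (h4 : MemLp f4 4 μ) :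
    Integrable (fun ω => f1 ω * f2 ω * (f3 ω * f4 ω)) μ :=
  integrable_mul_two (memℒp_two_mul' h1 h2) (memℒp_two_mul' h3 h4)

lemma indepFun_integral_mul_complex {X Y : Ω → ℂ} (h : IndepFun X Y μ)
    (hX : Integrable X μ) (hY : Integrable Y μ) :
    ∫ ω, X ω * Y ω ∂μ = (∫ ω, X ω ∂μ) * ∫ ω, Y ω ∂μ := by
  have hXr : Integrable (fun ω => (X ω).re) μ := hX.re
  have hXi : Integrable (fun ω => (X ω).im) μ := hX.im
  have hYr : Integrable (fun ω => (Y ω).re) μ := hY.re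
  have hYi : Integrable (fun ω => (Y ω).im) μ := hY.im
  have hrr : IndepFun (fun ω => (X ω).re) (fun ω => (Y ω).re) μ :=
    h.comp Complex.measurable_re Complex.measurable_re
  have hri : IndepFun (fun ω => (X ω).re) (fun ω => (Y ω).im) μ :=
    h.comp Complex.measurable_re Complex.measurable_im
  have hir : IndepFun (fun ω => (X ω).im) (fun ω => (Y ω).re) μ :=
    h.comp Complex.measurable_im Complex.measurable_re
  have hii : IndepFun (fun ω => (X ω).im) (fun ω => (Y ω).im) μ :=
    h.comp Complex.measurable_im Complex.measurable_im
  have irr : ∫ ω, (X ω).re * (Y ω).re ∂μ = (∫ ω, (X ω).re ∂μ) * ∫ ω, (Y ω).re ∂μ :=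
    hrr.integral_mul_eq_mul_integral hXr.1 hYr.1
  have iri : ∫ ω, (X ω).re * (Y ω).im ∂μ = (∫ ω, (X ω).re ∂μ) * ∫ ω, (Y ω).im ∂μ :=
    hri.integral_mul_eq_mul_integral hXr.1 hYi.1
  have iir : ∫ ω, (X ω).im * (Y ω).re ∂μ = (∫ ω, (X ω).im ∂μ) * ∫ ω, (Y ω).re ∂μ :=
    hir.integral_mul_eq_mul_integral hXi.1 hYr.1
  have iii : ∫ ω, (X ω).im * (Y ω).im ∂μ = (∫ ω, (X ω).im ∂μ) * ∫ ω, (Y ω).im ∂μ :=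
    hii.integral_mul_eq_mul_integral hXi.1 hYi.1
  have Irr : Integrable (fun ω => (X ω).re * (Y ω).re) μ := hrr.integrable_mul hXr hYr
  have Iri : Integrable (fun ω => (X ω).re * (Y ω).im) μ := hri.integrable_mul hXr hYi
  have Iir : Integrable (fun ω => (X ω).im * (Y ω).re) μ := hir.integrable_mul hXi hYr
  have Iii : Integrable (fun ω => (X ω).im * (Y ω).im) μ := hii.integrable_mul hXi hYi
  have IntXY : Integrable (fun ω => X ω * Y ω) μ := by
    have h1 : Integrable (fun ω => (((X ω).re * (Y ω).re - (X ω).im * (Y ω).im : ℝ) : ℂ)) μ :=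
      (Irr.sub Iii).ofReal
    have h2 : Integrable (fun ω =>
        (((X ω).re * (Y ω).im + (X ω).im * (Y ω).re : ℝ) : ℂ) * Complex.I) μ :=
      ((Iri.add Iir).ofReal).mul_const Complex.I
    refine (h1.add h2).congr (Filter.Eventually.of_forall fun ω => ?_)
    rw [Complex.ext_iff]; constructor <;> simp [Complex.mul_re, Complex.mul_im]
  have hre : ∫ ω, (X ω * Y ω).re ∂μ = (∫ ω, X ω * Y ω ∂μ).re := by
    simpa using integral_re IntXY
  have him : ∫ ω, (X ω * Y ω).im ∂μ = (∫ ω, X ω * Y ω ∂μ).im := by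
    simpa using integral_im IntXY
  have hXre : ∫ ω, (X ω).re ∂μ = (∫ ω, X ω ∂μ).re := by simpa using integral_re hX
  have hXim : ∫ ω, (X ω).im ∂μ = (∫ ω, X ω ∂μ).im := by simpa using integral_im hX
  have hYre : ∫ ω, (Y ω).re ∂μ = (∫ ω, Y ω ∂μ).re := by simpa using integral_re hY
  have hYim : ∫ ω, (Y ω).im ∂μ = (∫ ω, Y ω ∂μ).im := by simpa using integral_im hY
  apply Complex.ext
  · rw [← hre, Complex.mul_re, ← hXre, ← hXim, ← hYre, ← hYim, ← irr, ← iii,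
      ← integral_sub Irr Iii]
    exact integral_congr_ae (Filter.Eventually.of_forall fun ω => Complex.mul_re _ _)
  · rw [← him, Complex.mul_im, ← hXre, ← hXim, ← hYre, ← hYim, ← iri, ← iir,
      ← integral_add Iri Iir]
    exact integral_congr_ae (Filter.Eventually.of_forall fun ω => by
      simpa [mul_comm] using Complex.mul_im (X ω) (Y ω))

lemma isolate_indep {M : ℕ} {g : Fin M → Ω → ℂ}
    (hmeas : ∀ m, Measurable (g m))
    (hindep : iIndepFun g μ)
    {j i1 i2 i3 : Fin M} (h1 : i1 ≠ j) (h2 : i2 ≠ j) (h3 : i3 ≠ j)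
    (u u1 u2 u3 : ℂ → ℂ) (hu : Measurable u) (hu1 : Measurable u1)
    (hu2 : Measurable u2) (hu3 : Measurable u3) :
    IndepFun (fun ω => u (g j ω))
      (fun ω => u1 (g i1 ω) * u2 (g i2 ω) * u3 (g i3 ω)) μ := by
  classical
  have hdis : Disjoint ({j} : Finset (Fin M)) ({i1, i2, i3} : Finset (Fin M)) := by
    simp only [Finset.disjoint_singleton_left, Finset.mem_insert, Finset.mem_singleton]
    push_neg
    exact ⟨Ne.symm h1, Ne.symm h2, Ne.symm h3⟩
  have hfin := hindep.indepFun_finset {j} {i1, i2, i3} hdis hmeas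
  have hj : j ∈ ({j} : Finset (Fin M)) := Finset.mem_singleton_self j
  have hi1 : i1 ∈ ({i1, i2, i3} : Finset (Fin M)) := by simp
  have hi2 : i2 ∈ ({i1, i2, i3} : Finset (Fin M)) := by simp
  have hi3 : i3 ∈ ({i1, i2, i3} : Finset (Fin M)) := by simp
  exact hfin.comp (hu.comp (measurable_pi_apply ⟨j, hj⟩))
    (((hu1.comp (measurable_pi_apply ⟨i1, hi1⟩)).mul
      (hu2.comp (measurable_pi_apply ⟨i2, hi2⟩))).mul
      (hu3.comp (measurable_pi_apply ⟨i3, hi3⟩)))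

lemma quartic_moment {M : ℕ} {g : Fin M → Ω → ℂ} [IsProbabilityMeasure μ]
    (hmeas : ∀ m, Measurable (g m))
    (hindep : iIndepFun g μ)
    (hL4 : ∀ m, MemLp (g m) 4 μ)
    (hmean : ∀ m, ∫ ω, g m ω ∂μ = 0)
    (hsq : ∀ m, ∫ ω, (g m ω) ^ 2 ∂μ = 0)
    (habs2 : ∀ m, ∫ ω, ‖g m ω‖ ^ 2 ∂μ = 1)
    (habs4 : ∀ m, ∫ ω, ‖g m ω‖ ^ 4 ∂μ = 2)
    (k l p q : Fin M) :
    ∫ ω, g k ω * starRingEnd ℂ (g l ω) * (g p ω * starRingEnd ℂ (g q ω)) ∂μ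
      = (if k = l then 1 else 0) * (if p = q then 1 else 0)
        + (if k = q then 1 else 0) * (if p = l then 1 else 0) := by
  classical
  have mC : Measurable (starRingEnd ℂ) := RCLike.continuous_conj.measurable
  have m4c : ∀ j, MemLp (fun ω => starRingEnd ℂ (g j ω)) 4 μ := fun j => memℒp_conj' (hL4 j)
  set e : Bool → ℂ → ℂ := fun b z => if b then starRingEnd ℂ z else z with he
  have me : ∀ b, Measurable (e b) := by
    intro b; cases b
    · simpa [he] using measurable_id'
    · simpa [he] using mC
  have mem_e : ∀ b j, MemLp (fun ω => e b (g j ω)) 4 μ := by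
    intro b j; cases b
    · simpa [he] using hL4 j
    · simpa [he] using m4c j
  have E1c : ∀ j, ∫ ω, starRingEnd ℂ (g j ω) ∂μ = 0 := fun j => by
    rw [integral_conj, hmean j, map_zero]
  have Eze : ∀ b j, ∫ ω, e b (g j ω) ∂μ = 0 := by
    intro b j; cases b
    · simpa [he] using hmean j
    · simpa [he] using E1c j
  have E2 : ∀ j, ∫ ω, g j ω * g j ω ∂μ = 0 := fun j => by
    simpa [pow_two] using hsq j
  have E2c : ∀ j, ∫ ω, starRingEnd ℂ (g j ω) * starRingEnd ℂ (g j ω) ∂μ = 0 := fun j => by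
    rw [show (fun ω => starRingEnd ℂ (g j ω) * starRingEnd ℂ (g j ω))
        = fun ω => starRingEnd ℂ (g j ω * g j ω) from funext fun ω => (map_mul _ _ _).symm]
    rw [integral_conj, E2 j, map_zero]
  have Eabs2 : ∀ j, ∫ ω, g j ω * starRingEnd ℂ (g j ω) ∂μ = 1 := fun j => by
    have hpt : ∀ ω, g j ω * starRingEnd ℂ (g j ω) = ((‖g j ω‖ ^ 2 : ℝ) : ℂ) :=
      fun ω => by rw [Complex.mul_conj, Complex.sq_norm]
    rw [integral_congr_ae (Filter.Eventually.of_forall hpt),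
      show ∫ ω, ((‖g j ω‖ ^ 2 : ℝ) : ℂ) ∂μ
        = ((∫ ω, ‖g j ω‖ ^ 2 ∂μ : ℝ) : ℂ) from integral_ofReal,
      habs2 j, Complex.ofReal_one]
  have Eabs4 : ∀ j, ∫ ω, g j ω * starRingEnd ℂ (g j ω) *
      (g j ω * starRingEnd ℂ (g j ω)) ∂μ = 2 := fun j => by
    have hpt : ∀ ω, g j ω * starRingEnd ℂ (g j ω) * (g j ω * starRingEnd ℂ (g j ω))
        = ((‖g j ω‖ ^ 4 : ℝ) : ℂ) := fun ω => by
      rw [Complex.mul_conj, Complex.normSq_eq_norm_sq]; push_cast; ring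
    rw [integral_congr_ae (Filter.Eventually.of_forall hpt),
      show ∫ ω, ((‖g j ω‖ ^ 4 : ℝ) : ℂ) ∂μ
        = ((∫ ω, ‖g j ω‖ ^ 4 ∂μ : ℝ) : ℂ) from integral_ofReal,
      habs4 j]
    norm_num
  -- isolation: one factor with zero mean, independent of the rest
  have isoz : ∀ (b b1 b2 b3 : Bool) (j i1 i2 i3 : Fin M), i1 ≠ j → i2 ≠ j → i3 ≠ j →
      ∫ ω, e b (g j ω) * (e b1 (g i1 ω) * e b2 (g i2 ω) * e b3 (g i3 ω)) ∂μ = 0 := by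
    intro b b1 b2 b3 j i1 i2 i3 h1 h2 h3
    rw [indepFun_integral_mul_complex
      (isolate_indep hmeas hindep h1 h2 h3 _ _ _ _ (me b) (me b1) (me b2) (me b3))
      ((mem_e b j).integrable (by norm_num))
      (integrable_triple' (mem_e b1 i1) (mem_e b2 i2) (mem_e b3 i3)), Eze b j, zero_mul]
  by_cases hkl : k = l
  · subst hkl
    by_cases hpq : p = q
    · subst hpq
      by_cases hkp : k = p
      · subst hkp
        rw [Eabs4 k]; norm_num
      · have hind : IndepFun (fun ω => g k ω * starRingEnd ℂ (g k ω))
            (fun ω => g p ω * starRingEnd ℂ (g p ω)) μ :=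
          (hindep.indepFun hkp).comp (measurable_id.mul mC) (measurable_id.mul mC)
        rw [indepFun_integral_mul_complex hind (integrable_pair' (hL4 k) (m4c k))
          (integrable_pair' (hL4 p) (m4c p)), Eabs2 k, Eabs2 p]
        simp [hkp, Ne.symm hkp]
    · by_cases hpk : p = k
      · subst hpk
        -- integrand g p conj g p (g p conj g q), q ≠ p ; isolate conj (g q)
        have hqp : q ≠ p := fun hh => hpq hh.symm
        have hre : ∫ ω, g p ω * starRingEnd ℂ (g p ω) * (g p ω * starRingEnd ℂ (g q ω)) ∂μ
            = ∫ ω, e true (g q ω) * (e false (g p ω) * e true (g p ω) * e false (g p ω)) ∂μ :=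
          integral_congr_ae (Filter.Eventually.of_forall fun ω => by simp only [he, reduceIte, Bool.false_eq_true, if_false, if_true]; ring)
        rw [hre, isoz true false true false q p p p hqp.symm hqp.symm hqp.symm]
        simp [hpq, Ne.symm hqp]
      · -- isolate g p : p ≠ k, p ≠ q
        have hre : ∫ ω, g k ω * starRingEnd ℂ (g k ω) * (g p ω * starRingEnd ℂ (g q ω)) ∂μ
            = ∫ ω, e false (g p ω) * (e false (g k ω) * e true (g k ω) * e true (g q ω)) ∂μ :=
          integral_congr_ae (Filter.Eventually.of_forall fun ω => by simp only [he, reduceIte, Bool.false_eq_true, if_false, if_true]; ring)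
        rw [hre, isoz false false true true p k k q (fun hh => hpk hh.symm)
          (fun hh => hpk hh.symm) (fun hh => hpq hh.symm)]
        simp [hpq, hpk]
  · by_cases hpq : p = q
    · subst hpq
      by_cases hkp : k = p
      · subst hkp
        -- integrand g k conj g l (g k conj g k), l ≠ k ; isolate conj (g l)
        have hre : ∫ ω, g k ω * starRingEnd ℂ (g l ω) * (g k ω * starRingEnd ℂ (g k ω)) ∂μ
            = ∫ ω, e true (g l ω) * (e false (g k ω) * e false (g k ω) * e true (g k ω)) ∂μ :=
          integral_congr_ae (Filter.Eventually.of_forall fun ω => by simp only [he, reduceIte, Bool.false_eq_true, if_false, if_true]; ring)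
        rw [hre, isoz true false false true l k k k hkl hkl hkl]
        simp [hkl, Ne.symm hkl]
      · -- isolate g k : k ≠ l, k ≠ p
        have hre : ∫ ω, g k ω * starRingEnd ℂ (g l ω) * (g p ω * starRingEnd ℂ (g p ω)) ∂μ
            = ∫ ω, e false (g k ω) * (e true (g l ω) * e false (g p ω) * e true (g p ω)) ∂μ :=
          integral_congr_ae (Filter.Eventually.of_forall fun ω => by simp only [he, reduceIte, Bool.false_eq_true, if_false, if_true]; ring)
        rw [hre, isoz false true false true k l p p (fun hh => hkl hh.symm)
          (fun hh => hkp hh.symm) (fun hh => hkp hh.symm)]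
        simp [hkl, hkp]
    · by_cases hkq : k = q
      · by_cases hpl : p = l
        · subst hkq; subst hpl
          -- cross term: ∫ (g k conj g k)(g p conj g p) rearranged
          have hkp : k ≠ p := hkl
          have hind : IndepFun (fun ω => g k ω * starRingEnd ℂ (g k ω))
              (fun ω => g p ω * starRingEnd ℂ (g p ω)) μ :=
            (hindep.indepFun hkp).comp (measurable_id.mul mC) (measurable_id.mul mC)
          have hre : ∫ ω, g k ω * starRingEnd ℂ (g p ω) * (g p ω * starRingEnd ℂ (g k ω)) ∂μ
              = ∫ ω, (g k ω * starRingEnd ℂ (g k ω)) * (g p ω * starRingEnd ℂ (g p ω)) ∂μ :=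
            integral_congr_ae (Filter.Eventually.of_forall fun ω => by ring)
          rw [hre, indepFun_integral_mul_complex hind (integrable_pair' (hL4 k) (m4c k))
            (integrable_pair' (hL4 p) (m4c p)), Eabs2 k, Eabs2 p]
          simp [hkl, hkp]
        · subst hkq
          -- k=q, p≠l : isolate conj (g l), l ≠ k, l ≠ p
          have hre : ∫ ω, g k ω * starRingEnd ℂ (g l ω) * (g p ω * starRingEnd ℂ (g k ω)) ∂μ
              = ∫ ω, e true (g l ω) * (e false (g k ω) * e false (g p ω) * e true (g k ω)) ∂μ :=
            integral_congr_ae (Filter.Eventually.of_forall fun ω => by simp only [he, reduceIte, Bool.false_eq_true, if_false, if_true]; ring)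
          rw [hre, isoz true false false true l k p k hkl hpl hkl]
          simp [hkl, hpl]
      · by_cases hpl : p = l
        · subst hpl
          -- p=l, k≠q : isolate conj (g q), q ≠ k, q ≠ p
          have hre : ∫ ω, g k ω * starRingEnd ℂ (g p ω) * (g p ω * starRingEnd ℂ (g q ω)) ∂μ
              = ∫ ω, e true (g q ω) * (e false (g k ω) * e true (g p ω) * e false (g p ω)) ∂μ :=
            integral_congr_ae (Filter.Eventually.of_forall fun ω => by simp only [he, reduceIte, Bool.false_eq_true, if_false, if_true]; ring)
          rw [hre, isoz true false true false q k p p hkq hpq hpq]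
          simp [hkl, hkq]
        · by_cases hkp : k = p
          · subst hkp
            by_cases hlq : l = q
            · subst hlq
              -- ∫ (g k g k)(conj g l conj g l) = E[g²]E[conj g²] = 0
              have hind : IndepFun (fun ω => g k ω * g k ω)
                  (fun ω => starRingEnd ℂ (g l ω) * starRingEnd ℂ (g l ω)) μ :=
                (hindep.indepFun hkl).comp (measurable_id.mul measurable_id) (mC.mul mC)
              have hre : ∫ ω, g k ω * starRingEnd ℂ (g l ω) * (g k ω * starRingEnd ℂ (g l ω)) ∂μ
                  = ∫ ω, (g k ω * g k ω) *
                      (starRingEnd ℂ (g l ω) * starRingEnd ℂ (g l ω)) ∂μ :=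
                integral_congr_ae (Filter.Eventually.of_forall fun ω => by ring)
              rw [hre, indepFun_integral_mul_complex hind (integrable_pair' (hL4 k) (hL4 k))
                (integrable_pair' (m4c l) (m4c l)), E2 k, zero_mul]
              simp [hkl, hkq]
            · -- k=p, l≠q : isolate conj (g l) : l ≠ k, l ≠ q
              have hre : ∫ ω, g k ω * starRingEnd ℂ (g l ω) * (g k ω * starRingEnd ℂ (g q ω)) ∂μ
                  = ∫ ω, e true (g l ω) * (e false (g k ω) * e false (g k ω) * e true (g q ω)) ∂μ :=
                integral_congr_ae (Filter.Eventually.of_forall fun ω => by simp only [he, reduceIte, Bool.false_eq_true, if_false, if_true]; ring)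
              rw [hre, isoz true false false true l k k q hkl hkl (fun hh => hlq hh.symm)]
              simp [hkl, hkq, hpl]
          · -- k ∉ {l,p,q} : isolate g k
            have hre : ∫ ω, g k ω * starRingEnd ℂ (g l ω) * (g p ω * starRingEnd ℂ (g q ω)) ∂μ
                = ∫ ω, e false (g k ω) * (e true (g l ω) * e false (g p ω) * e true (g q ω)) ∂μ :=
              integral_congr_ae (Filter.Eventually.of_forall fun ω => by simp only [he, reduceIte, Bool.false_eq_true, if_false, if_true]; ring)
            rw [hre, isoz false true false true k l p q (fun hh => hkl hh.symm)
              (fun hh => hkp hh.symm) (fun hh => hkq hh.symm)]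
            simp [hkl, hkq, hpl]

lemma quad_expand {ι : Type*} [Fintype ι] (a b c d : ι → ℂ) :
    (∑ k, a k) * (∑ l, b l) * ((∑ p, c p) * (∑ q, d q))
      = ∑ k, ∑ p, ∑ l, ∑ q, a k * b l * (c p * d q) := by
  rw [Finset.sum_mul_sum, Finset.sum_mul_sum, Finset.sum_mul_sum]
  exact Finset.sum_congr rfl fun k _ => Finset.sum_congr rfl fun p _ =>
    Finset.sum_mul_sum _ _ _ _

lemma delta_sum {M : ℕ} (c1 c2 c3 c4 : Fin M → ℂ) :
    (∑ k, ∑ p, ∑ l, ∑ q, (c1 k * c2 l * (c3 p * c4 q)) *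
      ((if k = l then (1:ℂ) else 0) * (if p = q then 1 else 0)
        + (if k = q then 1 else 0) * (if p = l then 1 else 0)))
    = (∑ k, c1 k * c2 k) * (∑ p, c3 p * c4 p)
      + (∑ k, c1 k * c4 k) * (∑ p, c3 p * c2 p) := by
  rw [Finset.sum_mul_sum, Finset.sum_mul_sum, ← Finset.sum_add_distrib]
  refine Finset.sum_congr rfl fun k _ => ?_
  rw [← Finset.sum_add_distrib]
  refine Finset.sum_congr rfl fun p _ => ?_
  simp only [mul_add, mul_ite, ite_mul, mul_one, mul_zero, zero_mul, one_mul,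
    Finset.sum_add_distrib, Finset.sum_ite_eq, Finset.sum_ite_eq', Finset.mem_univ, if_true,
    Finset.sum_ite_irrel, Finset.sum_const_zero]
  ring

lemma trace_diag {M : ℕ} (d e : Fin M → ℂ) (A : Matrix (Fin M) (Fin M) ℂ) :
    (Matrix.diagonal d * A * Matrix.diagonal e * Aᴴ).trace
      = ∑ m, ∑ m', d m * e m' * (A m m' * starRingEnd ℂ (A m m')) := by
  simp only [Matrix.trace, Matrix.diag, Matrix.mul_apply, Matrix.conjTranspose_apply,
    Matrix.diagonal_apply, ite_mul, zero_mul, Finset.sum_ite_eq, Finset.sum_ite_eq',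
    Finset.mem_univ, if_true, Finset.sum_mul, Finset.mul_sum, mul_ite, mul_zero]
  refine Finset.sum_congr rfl fun m _ => Finset.sum_congr rfl fun m' _ => ?_
  simp only [RingHom.coe_coe, Complex.coe_algebraMap, starRingEnd_apply]
  ring

end
open MeasureTheory ProbabilityTheory Matrix
open scoped ComplexOrder

/-- Let `h = R^{1/2} g` with `R` Hermitian PSD and `g` a
vector of mutually independent complex random variables with the `CN(0,1)`
moment conditions. For any matrix `A`, real vectors `a, b`, and diagonal
matrices `D_a = diag(a)`, `D_b = diag(b)`, `D_h = diag(|h_m|²)`,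
`D_R = diag([R]_{mm})`:
`E[tr(D_a D_h A D_b D_h Aᴴ)]
  = tr(D_a D_R A D_b D_R Aᴴ) + ∑_m ∑_{m'} a_m b_{m'} |A_{mm'}|² |R_{mm'}|²`. -/
theorem cn_double_diag_quartic_identity
    {Ω : Type*} [MeasurableSpace Ω] (μ : Measure Ω) [IsProbabilityMeasure μ]
    (M : ℕ) (g : Fin M → Ω → ℂ)
    (hmeas : ∀ m, Measurable (g m))
    (hindep : iIndepFun g μ)
    (hL4 : ∀ m, MemLp (g m) 4 μ)
    (hmean : ∀ m, ∫ ω, g m ω ∂μ = 0)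
    (hsq : ∀ m, ∫ ω, (g m ω) ^ 2 ∂μ = 0)
    (habs2 : ∀ m, ∫ ω, ‖g m ω‖ ^ 2 ∂μ = 1)
    (habs4 : ∀ m, ∫ ω, ‖g m ω‖ ^ 4 ∂μ = 2)
    (R Rsqrt : Matrix (Fin M) (Fin M) ℂ)
    (hR : R.PosSemidef) (hRsqrt : Rsqrt.PosSemidef) (hRsq : Rsqrt * Rsqrt = R)
    (A : Matrix (Fin M) (Fin M) ℂ)
    (a b : Fin M → ℝ)
    (h : Ω → Fin M → ℂ) (hh : ∀ ω, h ω = Rsqrt.mulVec (fun m => g m ω))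
    (Da Db : Matrix (Fin M) (Fin M) ℂ)
    (hDa : Da = Matrix.diagonal (fun m => ((a m : ℝ) : ℂ)))
    (hDb : Db = Matrix.diagonal (fun m => ((b m : ℝ) : ℂ)))
    (Dh : Ω → Matrix (Fin M) (Fin M) ℂ)
    (hDh : ∀ ω, Dh ω = Matrix.diagonal (fun m => ((‖h ω m‖ ^ 2 : ℝ) : ℂ)))
    (DR : Matrix (Fin M) (Fin M) ℂ)
    (hDR : DR = Matrix.diagonal (fun m => R m m)) :
    ∫ ω, (Da * Dh ω * A * Db * Dh ω * Aᴴ).trace ∂μ =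
      (Da * DR * A * Db * DR * Aᴴ).trace +
        ((∑ m, ∑ m', a m * b m' * ‖A m m'‖ ^ 2 *
          ‖R m m'‖ ^ 2 : ℝ) : ℂ) := by
  classical
  have hsqabs : ∀ z : ℂ, ((‖z‖ ^ 2 : ℝ) : ℂ) = z * starRingEnd ℂ z :=
    fun z => by rw [Complex.sq_norm, Complex.mul_conj]
  -- components of h are in L⁴
  have hφ4 : ∀ m, MemLp (fun ω => h ω m) 4 μ := by
    intro m
    have hrepr : (fun ω => h ω m) = fun ω => ∑ k, Rsqrt m k * g k ω := by
      funext ω; rw [hh ω]; simp [Matrix.mulVec, dotProduct]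
    rw [hrepr]
    exact memLp_finsetSum _ fun k _ => (hL4 k).const_mul (Rsqrt m k)
  have hφ4c : ∀ m, MemLp (fun ω => starRingEnd ℂ (h ω m)) 4 μ := fun m => memℒp_conj' (hφ4 m)
  have hint : ∀ m m', Integrable (fun ω =>
      ((‖h ω m‖ ^ 2 : ℝ) : ℂ) * ((‖h ω m'‖ ^ 2 : ℝ) : ℂ)) μ := by
    intro m m'
    refine (integrable_quad' (hφ4 m) (hφ4c m) (hφ4 m') (hφ4c m')).congr
      (Filter.Eventually.of_forall fun ω => ?_)
    dsimp only
    rw [hsqabs, hsqabs]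
  -- hermitian bookkeeping
  have hCconj : ∀ i j, starRingEnd ℂ (Rsqrt i j) = Rsqrt j i := by
    intro i j
    have h1 := congrFun (congrFun hRsqrt.1 j) i
    rw [Matrix.conjTranspose_apply] at h1
    exact h1
  have hRconj : ∀ i j, starRingEnd ℂ (R i j) = R j i := by
    intro i j
    have h1 := congrFun (congrFun hR.1 j) i
    rw [Matrix.conjTranspose_apply] at h1
    exact h1
  have hRentry : ∀ i j, R i j = ∑ x, Rsqrt i x * Rsqrt x j := fun i j => by
    rw [← hRsq, Matrix.mul_apply]
  have hsum1 : ∀ i j, (∑ k, Rsqrt i k * starRingEnd ℂ (Rsqrt j k)) = R i j := by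
    intro i j
    rw [hRentry i j]
    exact Finset.sum_congr rfl fun k _ => by rw [hCconj j k]
  -- the key fourth-moment computation
  have intquart : ∀ k l p q : Fin M, Integrable (fun ω =>
      g k ω * starRingEnd ℂ (g l ω) * (g p ω * starRingEnd ℂ (g q ω))) μ :=
    fun k l p q => integrable_quad' (hL4 k) (memℒp_conj' (hL4 l)) (hL4 p) (memℒp_conj' (hL4 q))
  have key : ∀ m m', (∫ ω, ((‖h ω m‖ ^ 2 : ℝ) : ℂ) *
      ((‖h ω m'‖ ^ 2 : ℝ) : ℂ) ∂μ)
      = R m m * R m' m' + R m m' * starRingEnd ℂ (R m m') := by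
    intro m m'
    have expand : ∀ ω, ((‖h ω m‖ ^ 2 : ℝ) : ℂ) *
        ((‖h ω m'‖ ^ 2 : ℝ) : ℂ)
        = ∑ k, ∑ p, ∑ l, ∑ q,
            (Rsqrt m k * starRingEnd ℂ (Rsqrt m l) * (Rsqrt m' p * starRingEnd ℂ (Rsqrt m' q)))
              * (g k ω * starRingEnd ℂ (g l ω) * (g p ω * starRingEnd ℂ (g q ω))) := by
      intro ω
      rw [hsqabs, hsqabs, hh ω]
      have hmv : ∀ i, Rsqrt.mulVec (fun n => g n ω) i = ∑ k, Rsqrt i k * g k ω := fun i => by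
        simp [Matrix.mulVec, dotProduct]
      rw [hmv, hmv]
      rw [show starRingEnd ℂ (∑ k, Rsqrt m k * g k ω)
          = ∑ k, starRingEnd ℂ (Rsqrt m k) * starRingEnd ℂ (g k ω) from by
        rw [map_sum]; exact Finset.sum_congr rfl fun k _ => map_mul _ _ _]
      rw [show starRingEnd ℂ (∑ k, Rsqrt m' k * g k ω)
          = ∑ k, starRingEnd ℂ (Rsqrt m' k) * starRingEnd ℂ (g k ω) from by
        rw [map_sum]; exact Finset.sum_congr rfl fun k _ => map_mul _ _ _]
      rw [quad_expand]
      exact Finset.sum_congr rfl fun k _ => Finset.sum_congr rfl fun p _ =>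
        Finset.sum_congr rfl fun l _ => Finset.sum_congr rfl fun q _ => by ring
    rw [integral_congr_ae (Filter.Eventually.of_forall expand)]
    have swap : (∫ ω, ∑ k, ∑ p, ∑ l, ∑ q,
        (Rsqrt m k * starRingEnd ℂ (Rsqrt m l) * (Rsqrt m' p * starRingEnd ℂ (Rsqrt m' q)))
          * (g k ω * starRingEnd ℂ (g l ω) * (g p ω * starRingEnd ℂ (g q ω))) ∂μ)
        = ∑ k, ∑ p, ∑ l, ∑ q,
        (Rsqrt m k * starRingEnd ℂ (Rsqrt m l) * (Rsqrt m' p * starRingEnd ℂ (Rsqrt m' q)))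
          * ∫ ω, g k ω * starRingEnd ℂ (g l ω) * (g p ω * starRingEnd ℂ (g q ω)) ∂μ := by
      rw [integral_finset_sum _ (fun k _ => integrable_finset_sum _ fun p _ =>
        integrable_finset_sum _ fun l _ => integrable_finset_sum _ fun q _ =>
          (intquart k l p q).const_mul _)]
      refine Finset.sum_congr rfl fun k _ => ?_
      rw [integral_finset_sum _ (fun p _ => integrable_finset_sum _ fun l _ =>
        integrable_finset_sum _ fun q _ => (intquart k l p q).const_mul _)]
      refine Finset.sum_congr rfl fun p _ => ?_
      rw [integral_finset_sum _ (fun l _ => integrable_finset_sum _ fun q _ =>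
        (intquart k l p q).const_mul _)]
      refine Finset.sum_congr rfl fun l _ => ?_
      rw [integral_finset_sum _ (fun q _ => (intquart k l p q).const_mul _)]
      exact Finset.sum_congr rfl fun q _ => integral_const_mul _ _
    rw [swap]
    have hq : ∀ k l p q : Fin M,
        (∫ ω, g k ω * starRingEnd ℂ (g l ω) * (g p ω * starRingEnd ℂ (g q ω)) ∂μ)
        = (if k = l then (1:ℂ) else 0) * (if p = q then 1 else 0)
          + (if k = q then 1 else 0) * (if p = l then 1 else 0) :=
      quartic_moment hmeas hindep hL4 hmean hsq habs2 habs4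
    calc (∑ k, ∑ p, ∑ l, ∑ q,
        (Rsqrt m k * starRingEnd ℂ (Rsqrt m l) * (Rsqrt m' p * starRingEnd ℂ (Rsqrt m' q)))
          * ∫ ω, g k ω * starRingEnd ℂ (g l ω) * (g p ω * starRingEnd ℂ (g q ω)) ∂μ)
        = ∑ k, ∑ p, ∑ l, ∑ q,
          (Rsqrt m k * starRingEnd ℂ (Rsqrt m l) * (Rsqrt m' p * starRingEnd ℂ (Rsqrt m' q)))
            * ((if k = l then (1:ℂ) else 0) * (if p = q then 1 else 0)
              + (if k = q then 1 else 0) * (if p = l then 1 else 0)) := by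
          exact Finset.sum_congr rfl fun k _ => Finset.sum_congr rfl fun p _ =>
            Finset.sum_congr rfl fun l _ => Finset.sum_congr rfl fun q _ => by rw [hq]
      _ = (∑ k, Rsqrt m k * starRingEnd ℂ (Rsqrt m k))
            * (∑ p, Rsqrt m' p * starRingEnd ℂ (Rsqrt m' p))
          + (∑ k, Rsqrt m k * starRingEnd ℂ (Rsqrt m' k))
            * (∑ p, Rsqrt m' p * starRingEnd ℂ (Rsqrt m p)) :=
          delta_sum _ _ _ _
      _ = R m m * R m' m' + R m m' * starRingEnd ℂ (R m m') := by
          rw [hsum1, hsum1, hsum1, hsum1, hRconj m m']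
  -- pointwise trace formula (left side)
  have trace_pt : ∀ ω, (Da * Dh ω * A * Db * Dh ω * Aᴴ).trace
      = ∑ m, ∑ m', ((a m : ℂ) * (b m' : ℂ) * (A m m' * starRingEnd ℂ (A m m'))) *
          (((‖h ω m‖ ^ 2 : ℝ) : ℂ) * ((‖h ω m'‖ ^ 2 : ℝ) : ℂ)) := by
    intro ω
    rw [hDa, hDb, hDh ω, Matrix.diagonal_mul_diagonal,
      mul_assoc (Matrix.diagonal _ * A) (Matrix.diagonal _) (Matrix.diagonal _),
      Matrix.diagonal_mul_diagonal, trace_diag]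
    refine Finset.sum_congr rfl fun m _ => Finset.sum_congr rfl fun m' _ => ?_
    ring
  have trace_ptR : (Da * DR * A * Db * DR * Aᴴ).trace
      = ∑ m, ∑ m', ((a m : ℂ) * R m m * ((b m' : ℂ) * R m' m')
          * (A m m' * starRingEnd ℂ (A m m'))) := by
    rw [hDa, hDb, hDR, Matrix.diagonal_mul_diagonal,
      mul_assoc (Matrix.diagonal _ * A) (Matrix.diagonal _) (Matrix.diagonal _),
      Matrix.diagonal_mul_diagonal, trace_diag]
  have cast_eq : ((∑ m, ∑ m', a m * b m' * ‖A m m'‖ ^ 2 *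
        ‖R m m'‖ ^ 2 : ℝ) : ℂ)
      = ∑ m, ∑ m', ((a m : ℂ) * (b m' : ℂ)) *
          ((A m m' * starRingEnd ℂ (A m m')) * (R m m' * starRingEnd ℂ (R m m'))) := by
    push_cast
    exact Finset.sum_congr rfl fun m _ => Finset.sum_congr rfl fun m' _ => by
      rw [← Complex.ofReal_pow, ← Complex.ofReal_pow, hsqabs, hsqabs]; ring
  rw [integral_congr_ae (Filter.Eventually.of_forall trace_pt)]
  rw [integral_finset_sum _ (fun m _ => integrable_finset_sum _ fun m' _ =>
    (hint m m').const_mul _)]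
  calc (∑ m, ∫ ω, ∑ m', ((a m : ℂ) * (b m' : ℂ) * (A m m' * starRingEnd ℂ (A m m'))) *
          (((‖h ω m‖ ^ 2 : ℝ) : ℂ) * ((‖h ω m'‖ ^ 2 : ℝ) : ℂ)) ∂μ)
      = ∑ m, ∑ m', ((a m : ℂ) * (b m' : ℂ) * (A m m' * starRingEnd ℂ (A m m'))) *
          (R m m * R m' m' + R m m' * starRingEnd ℂ (R m m')) := by
        refine Finset.sum_congr rfl fun m _ => ?_
        rw [integral_finset_sum _ (fun m' _ => (hint m m').const_mul _)]
        refine Finset.sum_congr rfl fun m' _ => ?_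
        rw [integral_const_mul, key m m']
    _ = (Da * DR * A * Db * DR * Aᴴ).trace +
        ((∑ m, ∑ m', a m * b m' * ‖A m m'‖ ^ 2 *
          ‖R m m'‖ ^ 2 : ℝ) : ℂ) := by
        rw [trace_ptR, cast_eq, ← Finset.sum_add_distrib]
        refine Finset.sum_congr rfl fun m _ => ?_
        rw [← Finset.sum_add_distrib]
        refine Finset.sum_congr rfl fun m' _ => ?_
        ring
end

section
/- Let R ∈ ℂ^{M×M} be Hermitian positive semidefinite with positive-semidefinite square root R^{1/2}, set h = R^{1/2} g, and let B ∈ ℂ^{M×M} be arbitrary. Then the second moment of the quadratic form h^H B h satisfies E[|h^H B h|²] = |tr(B R)|² + tr(R B R B^H). -/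
open MeasureTheory ProbabilityTheory Matrix
open scoped ComplexOrder

section Aux

open MeasureTheory ProbabilityTheory
open scoped ENNReal

variable {Ω : Type*} [MeasurableSpace Ω] {μ : Measure Ω}

lemma indepFun_integral_mul_c {X Y : Ω → ℂ}
    (hXY : IndepFun X Y μ) (hX : Integrable X μ) (hY : Integrable Y μ) :
    ∫ ω, X ω * Y ω ∂μ = (∫ ω, X ω ∂μ) * ∫ ω, Y ω ∂μ := by
  have hprod : Integrable (fun ω => X ω * Y ω) μ := hXY.integrable_mul hX hY
  have h1 : IndepFun (fun ω => (X ω).re) (fun ω => (Y ω).re) μ :=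
    hXY.comp Complex.measurable_re Complex.measurable_re
  have h2 : IndepFun (fun ω => (X ω).re) (fun ω => (Y ω).im) μ :=
    hXY.comp Complex.measurable_re Complex.measurable_im
  have h3 : IndepFun (fun ω => (X ω).im) (fun ω => (Y ω).re) μ :=
    hXY.comp Complex.measurable_im Complex.measurable_re
  have h4 : IndepFun (fun ω => (X ω).im) (fun ω => (Y ω).im) μ :=
    hXY.comp Complex.measurable_im Complex.measurable_im
  have iXr : Integrable (fun ω => (X ω).re) μ := hX.re
  have iXi : Integrable (fun ω => (X ω).im) μ := hX.im
  have iYr : Integrable (fun ω => (Y ω).re) μ := hY.re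
  have iYi : Integrable (fun ω => (Y ω).im) μ := hY.im
  have e1 : ∫ ω, (X ω).re * (Y ω).re ∂μ = (∫ ω, (X ω).re ∂μ) * ∫ ω, (Y ω).re ∂μ :=
    h1.integral_fun_mul_eq_mul_integral iXr.1 iYr.1
  have e2 : ∫ ω, (X ω).re * (Y ω).im ∂μ = (∫ ω, (X ω).re ∂μ) * ∫ ω, (Y ω).im ∂μ :=
    h2.integral_fun_mul_eq_mul_integral iXr.1 iYi.1
  have e3 : ∫ ω, (X ω).im * (Y ω).re ∂μ = (∫ ω, (X ω).im ∂μ) * ∫ ω, (Y ω).re ∂μ :=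
    h3.integral_fun_mul_eq_mul_integral iXi.1 iYr.1
  have e4 : ∫ ω, (X ω).im * (Y ω).im ∂μ = (∫ ω, (X ω).im ∂μ) * ∫ ω, (Y ω).im ∂μ :=
    h4.integral_fun_mul_eq_mul_integral iXi.1 iYi.1
  have hre : ∫ ω, RCLike.re (X ω * Y ω) ∂μ
      = (∫ ω, (X ω).re ∂μ) * (∫ ω, (Y ω).re ∂μ) - (∫ ω, (X ω).im ∂μ) * ∫ ω, (Y ω).im ∂μ := by
    have hpt : ∀ ω, RCLike.re (X ω * Y ω) = (X ω).re * (Y ω).re - (X ω).im * (Y ω).im := by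
      intro ω; simp [Complex.mul_re]
    simp_rw [hpt]
    have i11 : Integrable (fun ω => (X ω).re * (Y ω).re) μ := h1.integrable_mul iXr iYr
    have i44 : Integrable (fun ω => (X ω).im * (Y ω).im) μ := h4.integrable_mul iXi iYi
    rw [integral_sub i11 i44, e1, e4]
  have him : ∫ ω, RCLike.im (X ω * Y ω) ∂μ
      = (∫ ω, (X ω).re ∂μ) * (∫ ω, (Y ω).im ∂μ) + (∫ ω, (X ω).im ∂μ) * ∫ ω, (Y ω).re ∂μ := by
    have hpt : ∀ ω, RCLike.im (X ω * Y ω) = (X ω).re * (Y ω).im + (X ω).im * (Y ω).re := by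
      intro ω; simp [Complex.mul_im]
    simp_rw [hpt]
    have i22 : Integrable (fun ω => (X ω).re * (Y ω).im) μ := h2.integrable_mul iXr iYi
    have i33 : Integrable (fun ω => (X ω).im * (Y ω).re) μ := h3.integrable_mul iXi iYr
    rw [integral_add i22 i33, e2, e3]
  have h0r := integral_re hprod
  have h0i := integral_im hprod
  have hxr := integral_re hX
  have hxi := integral_im hX
  have hyr := integral_re hY
  have hyi := integral_im hY
  simp only [RCLike.re_to_complex, RCLike.im_to_complex] at h0r h0i hxr hxi hyr hyi hre him
  apply Complex.ext
  · rw [Complex.mul_re, ← h0r, hre, ← hxr, ← hxi, ← hyr, ← hyi]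
  · rw [Complex.mul_im, ← h0i, him, ← hxr, ← hxi, ← hyr, ← hyi]
lemma integrable_prod_indep {ι : Type*} [DecidableEq ι] {F : ι → Ω → ℂ}
    [IsProbabilityMeasure μ]
    (hind : iIndepFun F μ) (hm : ∀ i, Measurable (F i))
    (hint : ∀ i, Integrable (F i) μ) (s : Finset ι) :
    Integrable (fun ω => ∏ i ∈ s, F i ω) μ ∧
      ∫ ω, ∏ i ∈ s, F i ω ∂μ = ∏ i ∈ s, ∫ ω, F i ω ∂μ := by
  classical
  induction s using Finset.induction_on with
  | empty => simp
  | @insert i s hnot ih =>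
    have hfun : (∏ j ∈ s, F j) = fun ω => ∏ j ∈ s, F j ω := by
      funext ω; simp
    have hip : IndepFun (F i) (fun ω => ∏ j ∈ s, F j ω) μ := by
      have := (hind.indepFun_finsetProd_of_notMem hm hnot).symm
      rwa [hfun] at this
    have hintp : Integrable (fun ω => F i ω * ∏ j ∈ s, F j ω) μ :=
      hip.integrable_mul (hint i) ih.1
    constructor
    · simp_rw [Finset.prod_insert hnot]; exact hintp
    · simp_rw [Finset.prod_insert hnot]
      rw [indepFun_integral_mul_c hip (hint i) ih.1, ih.2]
lemma pow4_bound {a b c d : ℝ} (ha : 0 ≤ a) (hb : 0 ≤ b) (hc : 0 ≤ c) (hd : 0 ≤ d) :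
    a * b * c * d ≤ a ^ 4 + b ^ 4 + c ^ 4 + d ^ 4 := by
  set m := max (max a b) (max c d) with hm
  have hma : a ≤ m := le_trans (le_max_left a b) (le_max_left _ _)
  have hmb : b ≤ m := le_trans (le_max_right a b) (le_max_left _ _)
  have hmc : c ≤ m := le_trans (le_max_left c d) (le_max_right _ _)
  have hmd : d ≤ m := le_trans (le_max_right c d) (le_max_right _ _)
  have hm0 : 0 ≤ m := ha.trans hma
  have h1 : a * b * c * d ≤ m ^ 4 := by
    have : m ^ 4 = m * m * m * m := by ring
    rw [this]
    have hab : a * b ≤ m * m := mul_le_mul hma hmb hb hm0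
    have habc : a * b * c ≤ m * m * m := mul_le_mul hab hmc hc (by positivity)
    exact mul_le_mul habc hmd hd (by positivity)
  have h2 : m ^ 4 ≤ a ^ 4 + b ^ 4 + c ^ 4 + d ^ 4 := by
    have p4 : ∀ x : ℝ, 0 ≤ x → 0 ≤ x ^ 4 := fun x hx => by positivity
    rcases max_choice (max a b) (max c d) with h | h <;> rw [hm, h]
    · rcases max_choice a b with h' | h' <;> rw [h'] <;>
        nlinarith [p4 a ha, p4 b hb, p4 c hc, p4 d hd]
    · rcases max_choice c d with h' | h' <;> rw [h'] <;>
        nlinarith [p4 a ha, p4 b hb, p4 c hc, p4 d hd]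
  linarith

lemma integrable_norm_pow4 {f : Ω → ℂ} (hf : MemLp f 4 μ) :
    Integrable (fun ω => ‖f ω‖ ^ (4 : ℕ)) μ := by
  have h := hf.integrable_norm_rpow (by norm_num) (by norm_num)
  have hpt : ∀ ω : Ω, ‖f ω‖ ^ ((4 : ℝ≥0∞).toReal) = ‖f ω‖ ^ (4 : ℕ) := by
    intro ω
    rw [ENNReal.toReal_ofNat, show (4 : ℝ) = ((4 : ℕ) : ℝ) by norm_num, Real.rpow_natCast]
  simp_rw [hpt] at h
  exact h

lemma integrable_conj_pow_mul_pow [IsProbabilityMeasure μ] {f : Ω → ℂ}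
    (hf : MemLp f 4 μ) (hm : Measurable f) {a b : ℕ} (hab : a + b ≤ 4) :
    Integrable (fun ω => (starRingEnd ℂ (f ω)) ^ a * (f ω) ^ b) μ := by
  have hmeas : AEStronglyMeasurable (fun ω => (starRingEnd ℂ (f ω)) ^ a * (f ω) ^ b) μ :=
    (((continuous_star.measurable.comp hm).pow_const a).mul (hm.pow_const b)).aestronglyMeasurable
  have hbound : Integrable (fun ω => 1 + ‖f ω‖ ^ (4:ℕ)) μ :=
    (integrable_const 1).add (integrable_norm_pow4 hf)
  refine Integrable.mono' hbound hmeas (Filter.Eventually.of_forall fun ω => ?_)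
  have hx : (0:ℝ) ≤ ‖f ω‖ := norm_nonneg _
  have hnorm : ‖(starRingEnd ℂ (f ω)) ^ a * (f ω) ^ b‖ = ‖f ω‖ ^ (a + b) := by
    rw [norm_mul, norm_pow, norm_pow, RCLike.norm_conj, pow_add]
  rw [hnorm]
  rcases le_or_gt ‖f ω‖ 1 with h1 | h1
  · have : ‖f ω‖ ^ (a + b) ≤ 1 := pow_le_one₀ hx h1
    have h4 : (0:ℝ) ≤ ‖f ω‖ ^ (4:ℕ) := by positivity
    linarith
  · have : ‖f ω‖ ^ (a + b) ≤ ‖f ω‖ ^ (4:ℕ) := pow_le_pow_right₀ h1.le hab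
    linarith

lemma integrable_four_prod [IsProbabilityMeasure μ] {f1 f2 f3 f4 : Ω → ℂ}
    (h1 : MemLp f1 4 μ) (h2 : MemLp f2 4 μ) (h3 : MemLp f3 4 μ) (h4 : MemLp f4 4 μ)
    (m1 : Measurable f1) (m2 : Measurable f2) (m3 : Measurable f3) (m4 : Measurable f4) :
    Integrable (fun ω => f1 ω * f2 ω * f3 ω * f4 ω) μ := by
  have hmeas : AEStronglyMeasurable (fun ω => f1 ω * f2 ω * f3 ω * f4 ω) μ :=
    (((m1.mul m2).mul m3).mul m4).aestronglyMeasurable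
  have hbound : Integrable
      (fun ω => ((‖f1 ω‖^(4:ℕ) + ‖f2 ω‖^(4:ℕ)) + ‖f3 ω‖^(4:ℕ)) + ‖f4 ω‖^(4:ℕ)) μ :=
    (((integrable_norm_pow4 h1).add (integrable_norm_pow4 h2)).add
      (integrable_norm_pow4 h3)).add (integrable_norm_pow4 h4)
  refine Integrable.mono' hbound hmeas (Filter.Eventually.of_forall fun ω => ?_)
  have := pow4_bound (norm_nonneg (f1 ω)) (norm_nonneg (f2 ω)) (norm_nonneg (f3 ω))
    (norm_nonneg (f4 ω))
  calc ‖f1 ω * f2 ω * f3 ω * f4 ω‖ = ‖f1 ω‖ * ‖f2 ω‖ * ‖f3 ω‖ * ‖f4 ω‖ := by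
        simp [norm_mul]
    _ ≤ _ := by simpa using this
lemma fourth_moment {M : ℕ} [IsProbabilityMeasure μ] (g : Fin M → Ω → ℂ)
    (hmeas : ∀ m, Measurable (g m))
    (hindep : iIndepFun g μ)
    (hL4 : ∀ m, MemLp (g m) 4 μ)
    (hmean : ∀ m, ∫ ω, g m ω ∂μ = 0)
    (hsq : ∀ m, ∫ ω, (g m ω) ^ 2 ∂μ = 0)
    (habs2 : ∀ m, ∫ ω, ‖g m ω‖ ^ 2 ∂μ = 1)
    (habs4 : ∀ m, ∫ ω, ‖g m ω‖ ^ 4 ∂μ = 2)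
    (i j k l : Fin M) :
    ∫ ω, starRingEnd ℂ (g i ω) * g j ω * g k ω * starRingEnd ℂ (g l ω) ∂μ
      = (if i = j then (1:ℂ) else 0) * (if k = l then 1 else 0)
        + (if i = k then 1 else 0) * (if j = l then 1 else 0) := by
  classical
  have hcast : ∀ f : Ω → ℝ, ∫ ω, Complex.ofReal (f ω) ∂μ = Complex.ofReal (∫ ω, f ω ∂μ) :=
    fun f => by simpa using integral_ofReal (𝕜 := ℂ) (f := f) (μ := μ)
  -- moment facts
  have hmom00 : ∀ m : Fin M, ∫ ω, (starRingEnd ℂ (g m ω)) ^ (0:ℕ) * (g m ω) ^ (0:ℕ) ∂μ = 1 := by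
    intro m; simp
  have hmom10 : ∀ m : Fin M, ∫ ω, (starRingEnd ℂ (g m ω)) ^ (1:ℕ) * (g m ω) ^ (0:ℕ) ∂μ = 0 := by
    intro m; simp only [pow_one, pow_zero, mul_one]
    rw [integral_conj, hmean m, map_zero]
  have hmom01 : ∀ m : Fin M, ∫ ω, (starRingEnd ℂ (g m ω)) ^ (0:ℕ) * (g m ω) ^ (1:ℕ) ∂μ = 0 := by
    intro m; simp only [pow_zero, pow_one, one_mul]; exact hmean m
  have hmom20 : ∀ m : Fin M, ∫ ω, (starRingEnd ℂ (g m ω)) ^ (2:ℕ) * (g m ω) ^ (0:ℕ) ∂μ = 0 := by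
    intro m; simp only [pow_zero, mul_one]
    have hpt : ∀ ω, (starRingEnd ℂ (g m ω)) ^ (2:ℕ) = starRingEnd ℂ ((g m ω) ^ (2:ℕ)) :=
      fun ω => (map_pow _ _ _).symm
    simp_rw [hpt]
    rw [integral_conj, hsq m, map_zero]
  have hmom02 : ∀ m : Fin M, ∫ ω, (starRingEnd ℂ (g m ω)) ^ (0:ℕ) * (g m ω) ^ (2:ℕ) ∂μ = 0 := by
    intro m; simp only [pow_zero, one_mul]; exact hsq m
  have hmom11 : ∀ m : Fin M, ∫ ω, (starRingEnd ℂ (g m ω)) ^ (1:ℕ) * (g m ω) ^ (1:ℕ) ∂μ = 1 := by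
    intro m; simp only [pow_one]
    have hpt : ∀ ω, starRingEnd ℂ (g m ω) * g m ω
        = Complex.ofReal (‖g m ω‖ ^ 2) := by
      intro ω; rw [mul_comm, Complex.mul_conj, Complex.sq_norm]
    simp_rw [hpt]
    rw [hcast (fun ω => ‖g m ω‖ ^ 2), habs2 m]; norm_num
  have hmom22 : ∀ m : Fin M, ∫ ω, (starRingEnd ℂ (g m ω)) ^ (2:ℕ) * (g m ω) ^ (2:ℕ) ∂μ = 2 := by
    intro m
    have hpt : ∀ ω, (starRingEnd ℂ (g m ω)) ^ (2:ℕ) * (g m ω) ^ (2:ℕ)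
        = Complex.ofReal (‖g m ω‖ ^ 4) := by
      intro ω
      have h1 : (starRingEnd ℂ (g m ω)) ^ (2:ℕ) * (g m ω) ^ (2:ℕ)
          = (g m ω * starRingEnd ℂ (g m ω)) ^ 2 := by ring
      rw [h1, Complex.mul_conj, ← Complex.sq_norm]
      push_cast; ring
    simp_rw [hpt]
    rw [hcast (fun ω => ‖g m ω‖ ^ 4), habs4 m]; norm_num
  -- the factor family
  set F : Fin M → Ω → ℂ := fun m =>
    (fun z : ℂ => (starRingEnd ℂ z) ^ ((if i = m then 1 else 0) + (if l = m then 1 else 0))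
      * z ^ ((if j = m then 1 else 0) + (if k = m then 1 else 0))) ∘ g m with hF
  have hφmeas : ∀ m : Fin M, Measurable (fun z : ℂ =>
      (starRingEnd ℂ z) ^ ((if i = m then 1 else 0) + (if l = m then 1 else 0))
        * z ^ ((if j = m then 1 else 0) + (if k = m then 1 else 0))) := by
    intro m
    exact (continuous_star.measurable.pow_const _).mul (measurable_id.pow_const _)
  have hFmeas : ∀ m, Measurable (F m) := by
    intro m; rw [hF]; exact (hφmeas m).comp (hmeas m)
  have hexp4 : ∀ m : Fin M,
      ((if i = m then 1 else 0) + (if l = m then 1 else 0))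
        + ((if j = m then 1 else 0) + (if k = m then 1 else 0)) ≤ 4 := by
    intro m; split_ifs <;> omega
  have hFint : ∀ m, Integrable (F m) μ := by
    intro m; rw [hF]
    exact integrable_conj_pow_mul_pow (hL4 m) (hmeas m) (hexp4 m)
  have hFind : iIndepFun F μ := by
    rw [hF]; exact hindep.comp _ hφmeas
  -- pointwise factorization
  have hone : ∀ (x : Fin M → ℂ) (t : Fin M), (∏ m, x m ^ (if t = m then 1 else 0)) = x t := by
    intro x t
    have hpt : ∀ m : Fin M, x m ^ (if t = m then 1 else 0) = (if t = m then x m else 1) := by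
      intro m; split_ifs <;> simp
    rw [Finset.prod_congr rfl fun m _ => hpt m, Finset.prod_ite_eq]
    simp
  have hptw : (fun ω => starRingEnd ℂ (g i ω) * g j ω * g k ω * starRingEnd ℂ (g l ω))
      = fun ω => ∏ m, F m ω := by
    funext ω
    simp only [hF, Function.comp_apply]
    have hsplit : ∀ m : Fin M,
        (starRingEnd ℂ (g m ω)) ^ ((if i = m then 1 else 0) + (if l = m then 1 else 0))
          * (g m ω) ^ ((if j = m then 1 else 0) + (if k = m then 1 else 0))
        = ((starRingEnd ℂ (g m ω)) ^ (if i = m then 1 else 0)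
            * (starRingEnd ℂ (g m ω)) ^ (if l = m then 1 else 0))
          * ((g m ω) ^ (if j = m then 1 else 0) * (g m ω) ^ (if k = m then 1 else 0)) := by
      intro m; rw [pow_add, pow_add]
    rw [Finset.prod_congr rfl fun m _ => hsplit m, Finset.prod_mul_distrib,
      Finset.prod_mul_distrib, Finset.prod_mul_distrib,
      hone (fun m => starRingEnd ℂ (g m ω)) i, hone (fun m => starRingEnd ℂ (g m ω)) l,
      hone (fun m => g m ω) j, hone (fun m => g m ω) k]
    ring
  rw [show (∫ ω, starRingEnd ℂ (g i ω) * g j ω * g k ω * starRingEnd ℂ (g l ω) ∂μ)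
      = ∫ ω, ∏ m, F m ω ∂μ from by rw [← hptw],
    (integrable_prod_indep hFind hFmeas hFint Finset.univ).2]
  -- now evaluate the product by case analysis
  have Ival : ∀ (m : Fin M) (A B : ℕ),
      ((if i = m then 1 else 0) + (if l = m then 1 else 0) = A) →
      ((if j = m then 1 else 0) + (if k = m then 1 else 0) = B) →
      ∫ ω, F m ω ∂μ = ∫ ω, (starRingEnd ℂ (g m ω)) ^ A * (g m ω) ^ B ∂μ := by
    intro m A B hA hB
    simp only [hF, Function.comp_apply, hA, hB]
  have key0 : ∀ w : Fin M, (∫ ω, F w ω ∂μ = 0) →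
      (∏ m, ∫ ω, F m ω ∂μ) = 0 :=
    fun w hw => Finset.prod_eq_zero (Finset.mem_univ w) hw
  have pair : ∀ w₁ w₂ : Fin M, w₁ ≠ w₂ →
      (∀ w, w ≠ w₁ → w ≠ w₂ → ∫ ω, F w ω ∂μ = 1) →
      (∏ m, ∫ ω, F m ω ∂μ) = (∫ ω, F w₁ ω ∂μ) * ∫ ω, F w₂ ω ∂μ := by
    intro w₁ w₂ hne hothers
    rw [← Finset.prod_subset (Finset.subset_univ {w₁, w₂}) (fun x _ hx => by
      simp only [Finset.mem_insert, Finset.mem_singleton] at hx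
      push_neg at hx
      exact hothers x hx.1 hx.2), Finset.prod_pair hne]
  by_cases hij : i = j
  · subst hij
    by_cases hkl : k = l
    · subst hkl
      by_cases hik : i = k
      · subst hik
        rw [Finset.prod_eq_single i
          (fun w _ hw => by
            rw [Ival w 0 0 (by simp [Ne.symm hw]) (by simp [Ne.symm hw])]; exact hmom00 w)
          (fun hn => absurd (Finset.mem_univ i) hn),
          Ival i 2 2 (by simp) (by simp), hmom22 i]
        norm_num
      · have hki : ¬ k = i := fun h => hik h.symm
        rw [pair i k hik (fun w hw1 hw2 => by
            rw [Ival w 0 0 (by simp [Ne.symm hw1, Ne.symm hw2])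
              (by simp [Ne.symm hw1, Ne.symm hw2])]; exact hmom00 w),
          Ival i 1 1 (by simp [hki]) (by simp [hki]),
          Ival k 1 1 (by simp [hik]) (by simp [hik]), hmom11 i, hmom11 k]
        norm_num [hik]
    · by_cases hik : i = k
      · subst hik
        rw [key0 l (by rw [Ival l 1 0 (by simp [hkl]) (by simp [hkl])]; exact hmom10 l)]
        norm_num [hkl]
      · by_cases hil : i = l
        · subst hil
          have hki : ¬ k = i := fun h => hik h.symm
          rw [key0 k (by rw [Ival k 0 1 (by simp [hik]) (by simp [hik])]; exact hmom01 k)]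
          norm_num [hik, hki]
        · have hlk : ¬ l = k := fun h => hkl h.symm
          rw [key0 k (by rw [Ival k 0 1 (by simp [hik, hlk]) (by simp [hik])]; exact hmom01 k)]
          norm_num [hik, hkl]
  · by_cases hkl : k = l
    · subst hkl
      by_cases hik : i = k
      · subst hik
        have hji : ¬ j = i := fun h => hij h.symm
        rw [key0 j (by rw [Ival j 0 1 (by simp [hij]) (by simp [hij])]; exact hmom01 j)]
        norm_num [hij, hji]
      · have hki : ¬ k = i := fun h => hik h.symm
        have hji : ¬ j = i := fun h => hij h.symm
        rw [key0 i (by rw [Ival i 1 0 (by simp [hki]) (by simp [hji, hki])]; exact hmom10 i)]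
        norm_num [hij, hik]
    · by_cases hik : i = k
      · subst hik
        by_cases hjl : j = l
        · subst hjl
          have hji : ¬ j = i := fun h => hij h.symm
          rw [pair i j hij (fun w hw1 hw2 => by
              rw [Ival w 0 0 (by simp [Ne.symm hw1, Ne.symm hw2])
                (by simp [Ne.symm hw1, Ne.symm hw2])]; exact hmom00 w),
            Ival i 1 1 (by simp [hji]) (by simp [hji]),
            Ival j 1 1 (by simp [hij]) (by simp [hij]), hmom11 i, hmom11 j]
          norm_num [hij]
        · have hlj : ¬ l = j := fun h => hjl h.symm
          rw [key0 j (by rw [Ival j 0 1 (by simp [hij, hlj]) (by simp [hij])]; exact hmom01 j)]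
          norm_num [hij, hjl]
      · by_cases hil : i = l
        · subst hil
          by_cases hjk : j = k
          · subst hjk
            have hji : ¬ j = i := fun h => hij h.symm
            rw [key0 i (by rw [Ival i 2 0 (by simp) (by simp [hji])]; exact hmom20 i)]
            norm_num [hij, hji]
          · have hkj : ¬ k = j := fun h => hjk h.symm
            rw [key0 j (by rw [Ival j 0 1 (by simp [hij]) (by simp [hij, hkj])]; exact hmom01 j)]
            norm_num [hij, hik]
        · have hli : ¬ l = i := fun h => hil h.symm
          have hji : ¬ j = i := fun h => hij h.symm
          have hki : ¬ k = i := fun h => hik h.symm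
          rw [key0 i (by rw [Ival i 1 0 (by simp [hli]) (by simp [hji, hki])]; exact hmom10 i)]
          norm_num [hij, hik]

open Matrix in
lemma sum_ite_identity {n : ℕ} (A : Matrix (Fin n) (Fin n) ℂ) :
    ∑ i, ∑ j, ∑ k, ∑ l, A i j * starRingEnd ℂ (A k l) *
        ((if i = j then (1:ℂ) else 0) * (if k = l then 1 else 0)
          + (if i = k then 1 else 0) * (if j = l then 1 else 0))
      = A.trace * starRingEnd ℂ (A.trace) + (A * Aᴴ).trace := by
  simp only [mul_add, Finset.sum_add_distrib]
  congr 1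
  · simp only [mul_ite, ite_mul, mul_one, one_mul, mul_zero, zero_mul,
      Finset.sum_ite_eq, Finset.mem_univ, if_true, Finset.sum_ite_irrel, Finset.sum_const_zero]
    simp only [Matrix.trace, Matrix.diag, map_sum, Finset.sum_mul, Finset.mul_sum]
    exact Finset.sum_comm
  · simp only [mul_ite, ite_mul, mul_one, one_mul, mul_zero, zero_mul,
      Finset.sum_ite_eq, Finset.mem_univ, if_true, Finset.sum_ite_irrel, Finset.sum_const_zero]
    simp only [Matrix.trace, Matrix.diag, Matrix.mul_apply, Matrix.conjTranspose_apply,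
      Finset.mul_sum, RCLike.star_def]


end Aux

/-- Let `h = R^{1/2} g` with `R` Hermitian PSD and `g` a
vector of mutually independent complex random variables with the `CN(0,1)`
moment conditions. For any matrix `B`, the second moment of the quadratic form
`hᴴ B h` satisfies `E[|hᴴ B h|²] = |tr(B R)|² + tr(R B R Bᴴ)`. -/
theorem cn_quadratic_form_second_moment
    {Ω : Type*} [MeasurableSpace Ω] (μ : Measure Ω) [IsProbabilityMeasure μ]
    (M : ℕ) (g : Fin M → Ω → ℂ)
    (hmeas : ∀ m, Measurable (g m))
    (hindep : iIndepFun g μ)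
    (hL4 : ∀ m, MemLp (g m) 4 μ)
    (hmean : ∀ m, ∫ ω, g m ω ∂μ = 0)
    (hsq : ∀ m, ∫ ω, (g m ω) ^ 2 ∂μ = 0)
    (habs2 : ∀ m, ∫ ω, ‖g m ω‖ ^ 2 ∂μ = 1)
    (habs4 : ∀ m, ∫ ω, ‖g m ω‖ ^ 4 ∂μ = 2)
    (R Rsqrt : Matrix (Fin M) (Fin M) ℂ)
    (hR : R.PosSemidef) (hRsqrt : Rsqrt.PosSemidef) (hRsq : Rsqrt * Rsqrt = R)
    (B : Matrix (Fin M) (Fin M) ℂ)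
    (h : Ω → Fin M → ℂ) (hh : ∀ ω, h ω = Rsqrt.mulVec (fun m => g m ω)) :
    ((∫ ω, ‖star (h ω) ⬝ᵥ B.mulVec (h ω)‖ ^ 2 ∂μ : ℝ) : ℂ) =
      ((‖(B * R).trace‖ ^ 2 : ℝ) : ℂ) + (R * B * R * Bᴴ).trace := by
  classical
  have hcast : ∀ f : Ω → ℝ, ∫ ω, Complex.ofReal (f ω) ∂μ = Complex.ofReal (∫ ω, f ω ∂μ) :=
    fun f => by simpa using integral_ofReal (𝕜 := ℂ) (f := f) (μ := μ)
  have hH : Rsqrtᴴ = Rsqrt := hRsqrt.isHermitian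
  set A : Matrix (Fin M) (Fin M) ℂ := Rsqrt * B * Rsqrt with hAdef
  have htr1 : (B * R).trace = A.trace := by
    rw [hAdef, ← hRsq, ← mul_assoc]
    exact Matrix.trace_mul_cycle B Rsqrt Rsqrt
  have hAH : Aᴴ = Rsqrt * Bᴴ * Rsqrt := by
    rw [hAdef, Matrix.conjTranspose_mul, Matrix.conjTranspose_mul, hH, ← mul_assoc]
  have htr2 : (R * B * R * Bᴴ).trace = (A * Aᴴ).trace := by
    have e1 : R * B * R * Bᴴ = Rsqrt * (Rsqrt * B * Rsqrt * Rsqrt * Bᴴ) := by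
      rw [← hRsq]; simp only [mul_assoc]
    have e2 : A * Aᴴ = Rsqrt * B * Rsqrt * Rsqrt * Bᴴ * Rsqrt := by
      rw [hAH, hAdef]; simp only [mul_assoc]
    rw [e1, e2, Matrix.trace_mul_comm]
  have hquad : ∀ ω, star (h ω) ⬝ᵥ B.mulVec (h ω)
      = ∑ p : Fin M × Fin M, starRingEnd ℂ (g p.1 ω) * A p.1 p.2 * g p.2 ω := by
    intro ω
    rw [hh ω, Matrix.star_mulVec, Matrix.mulVec_mulVec, dotProduct_mulVec,
      Matrix.vecMul_vecMul, hH, ← mul_assoc, ← hAdef, Fintype.sum_prod_type]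
    simp only [dotProduct, Matrix.vecMul, Pi.star_apply, Finset.sum_mul]
    rw [Finset.sum_comm]
    refine Finset.sum_congr rfl fun i _ => Finset.sum_congr rfl fun j _ => ?_
    simp [RCLike.star_def]
  have hmeasc : ∀ m, Measurable (fun ω => starRingEnd ℂ (g m ω)) :=
    fun m => continuous_star.measurable.comp (hmeas m)
  have hL4c : ∀ m, MemLp (fun ω => starRingEnd ℂ (g m ω)) 4 μ := fun m =>
    (hL4 m).of_le (hmeasc m).aestronglyMeasurable (Filter.Eventually.of_forall fun ω => by simp)
  have hint4 : ∀ z : (Fin M × Fin M) × Fin M × Fin M,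
      Integrable (fun ω => starRingEnd ℂ (g z.1.1 ω) * g z.1.2 ω * g z.2.1 ω
        * starRingEnd ℂ (g z.2.2 ω)) μ := fun z =>
    integrable_four_prod (hL4c z.1.1) (hL4 z.1.2) (hL4 z.2.1) (hL4c z.2.2)
      (hmeasc z.1.1) (hmeas z.1.2) (hmeas z.2.1) (hmeasc z.2.2)
  have hXconj : ∀ ω, (star (h ω) ⬝ᵥ B.mulVec (h ω))
        * starRingEnd ℂ (star (h ω) ⬝ᵥ B.mulVec (h ω))
      = ∑ z : (Fin M × Fin M) × Fin M × Fin M,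
          (A z.1.1 z.1.2 * starRingEnd ℂ (A z.2.1 z.2.2))
            * (starRingEnd ℂ (g z.1.1 ω) * g z.1.2 ω * g z.2.1 ω
                * starRingEnd ℂ (g z.2.2 ω)) := by
    intro ω
    rw [hquad ω, map_sum, Finset.sum_mul_sum]
    conv_rhs => rw [Fintype.sum_prod_type]
    refine Finset.sum_congr rfl fun p _ => Finset.sum_congr rfl fun q _ => ?_
    simp only [_root_.map_mul, Complex.conj_conj]
    ring
  have hmain : ∫ ω, (star (h ω) ⬝ᵥ B.mulVec (h ω))
        * starRingEnd ℂ (star (h ω) ⬝ᵥ B.mulVec (h ω)) ∂μ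
      = A.trace * starRingEnd ℂ (A.trace) + (A * Aᴴ).trace := by
    calc ∫ ω, (star (h ω) ⬝ᵥ B.mulVec (h ω))
          * starRingEnd ℂ (star (h ω) ⬝ᵥ B.mulVec (h ω)) ∂μ
        = ∑ z : (Fin M × Fin M) × Fin M × Fin M,
            ∫ ω, (A z.1.1 z.1.2 * starRingEnd ℂ (A z.2.1 z.2.2))
              * (starRingEnd ℂ (g z.1.1 ω) * g z.1.2 ω * g z.2.1 ω
                  * starRingEnd ℂ (g z.2.2 ω)) ∂μ := by
          simp_rw [hXconj]
          exact integral_finset_sum _ (fun z _ => (hint4 z).const_mul _)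
      _ = ∑ z : (Fin M × Fin M) × Fin M × Fin M,
            (A z.1.1 z.1.2 * starRingEnd ℂ (A z.2.1 z.2.2))
              * ∫ ω, starRingEnd ℂ (g z.1.1 ω) * g z.1.2 ω * g z.2.1 ω
                  * starRingEnd ℂ (g z.2.2 ω) ∂μ :=
          Finset.sum_congr rfl fun z _ => integral_const_mul _ _
      _ = ∑ z : (Fin M × Fin M) × Fin M × Fin M,
            (A z.1.1 z.1.2 * starRingEnd ℂ (A z.2.1 z.2.2))
              * ((if z.1.1 = z.1.2 then (1:ℂ) else 0) * (if z.2.1 = z.2.2 then 1 else 0)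
                + (if z.1.1 = z.2.1 then 1 else 0) * (if z.1.2 = z.2.2 then 1 else 0)) :=
          Finset.sum_congr rfl fun z _ => by
            rw [fourth_moment g hmeas hindep hL4 hmean hsq habs2 habs4
              z.1.1 z.1.2 z.2.1 z.2.2]
      _ = A.trace * starRingEnd ℂ (A.trace) + (A * Aᴴ).trace := by
          rw [← sum_ite_identity A]
          simp only [Fintype.sum_prod_type]
  have habs' : ∀ ω, Complex.ofReal (‖star (h ω) ⬝ᵥ B.mulVec (h ω)‖ ^ 2)
      = (star (h ω) ⬝ᵥ B.mulVec (h ω)) * starRingEnd ℂ (star (h ω) ⬝ᵥ B.mulVec (h ω)) := by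
    intro ω
    rw [Complex.sq_norm]
    exact (Complex.mul_conj _).symm
  calc ((∫ ω, ‖star (h ω) ⬝ᵥ B.mulVec (h ω)‖ ^ 2 ∂μ : ℝ) : ℂ)
      = ∫ ω, Complex.ofReal (‖star (h ω) ⬝ᵥ B.mulVec (h ω)‖ ^ 2) ∂μ :=
        (hcast _).symm
    _ = ∫ ω, (star (h ω) ⬝ᵥ B.mulVec (h ω))
          * starRingEnd ℂ (star (h ω) ⬝ᵥ B.mulVec (h ω)) ∂μ := by simp_rw [habs']
    _ = A.trace * starRingEnd ℂ (A.trace) + (A * Aᴴ).trace := hmain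
    _ = ((‖(B * R).trace‖ ^ 2 : ℝ) : ℂ) + (R * B * R * Bᴴ).trace := by
        rw [htr1, htr2, Complex.sq_norm, Complex.mul_conj]
end

section
/- With x_m = ε_m² for m = 1,…,M, the denominator of the closed-form MR effective SINR, namely D_k(ε, p) = p_k tr(D_ε² · abs(diag(A_k))²) + ∑_{i=1}^K (p_i q_i)/(τ_p q_k) · [ tr(D_ε² · abs(diag(R_i R_k Ψ_k^{-1}))²) + tr(D_ε² · diag(abs(R_k Ψ_k^{-1})² D_ε² abs(R_i)²)) ] + tr((∑_{i=1}^K p_i R_i + σ² I_M + ∑_{i=1}^K p_i D_ε² D_{R_i}) · A_k), equals the posynomial f_k^d(x, p) = ∑_{m=1}^M [ p_k |[A_k]_{mm}|² + ∑_{i=1}^K ( (p_i q_i)/(τ_p q_k) |[R_i R_k Ψ_k^{-1}]_{mm}|² + p_i [R_i]_{mm} [A_k]_{mm} ) ] x_m + x^T ( ∑_{i=1}^K (p_i q_i)/(τ_p q_k) · abs(R_k Ψ_k^{-1})² ∘ abs(R_i)² ) x + tr((∑_{i=1}^K p_i R_i + σ² I_M) A_k), where ∘ denotes the entrywise (Hadamard)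 product. Consequently the closed-form MR SINR equals the monomial/posynomial ratio p_k w_k / f_k^d(x, p) with w_k = tr(A_k)². -/
open Matrix Finset
open scoped ComplexOrder

/-- The entrywise squared-absolute-value `abs(X)²` of a complex matrix. -/
noncomputable def entrywiseAbsSq {M : ℕ} (X : Matrix (Fin M) (Fin M) ℂ) :
    Matrix (Fin M) (Fin M) ℂ :=
  Matrix.of fun i j => ((‖X i j‖ ^ 2 : ℝ) : ℂ)

/-- The diagonal matrix `abs(diag(X))²` of squared absolute values of the
diagonal entries of `X`. -/
noncomputable def absDiagSq {M : ℕ} (X : Matrix (Fin M) (Fin M) ℂ) :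
    Matrix (Fin M) (Fin M) ℂ :=
  Matrix.diagonal fun m => ((‖X m m‖ ^ 2 : ℝ) : ℂ)

/-- The diagonal part `diag(Y)` of a matrix `Y`. -/
def diagPart {M : ℕ} (Y : Matrix (Fin M) (Fin M) ℂ) :
    Matrix (Fin M) (Fin M) ℂ :=
  Matrix.diagonal fun m => Y m m

/-- With `x_m = ε_m²`, the denominator `D_k(ε, p)` of the
closed-form MR effective SINR equals the posynomial `f_k^d(x, p)`, and hence
the closed-form MR SINR `p_k w_k / D_k` equals the monomial/posynomial ratio
`p_k w_k / f_k^d(x, p)` with `w_k = tr(A_k)²`, `A_k = R_k Ψ_k⁻¹ R_k`. -/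
theorem mr_sinr_denominator_posynomial
    (M K : ℕ) (hM : 1 ≤ M) (hK : 1 ≤ K) (k : Fin K)
    (R : Fin K → Matrix (Fin M) (Fin M) ℂ) (hR : ∀ i, (R i).PosSemidef)
    (Ψ : Matrix (Fin M) (Fin M) ℂ) (hΨ : Ψ.PosDef)
    (σ2 τp : ℝ) (hσ2 : 0 < σ2) (hτp : 0 < τp)
    (q : Fin K → ℝ) (hq : ∀ i, 0 < q i)
    (p : Fin K → ℝ) (hp : ∀ i, 0 ≤ p i)
    (ε : Fin M → ℝ) (hε : ∀ m, 0 ≤ ε m)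
    (x : Fin M → ℝ) (hx : ∀ m, x m = (ε m) ^ 2) :
    let A : Matrix (Fin M) (Fin M) ℂ := R k * Ψ⁻¹ * R k
    let Dε : Matrix (Fin M) (Fin M) ℂ := Matrix.diagonal fun m => ((ε m : ℝ) : ℂ)
    let c : Fin K → ℂ := fun i => ((p i * q i / (τp * q k) : ℝ) : ℂ)
    -- the denominator of the closed-form MR effective SINR
    let D : ℂ :=
      ((p k : ℝ) : ℂ) * (Dε ^ 2 * absDiagSq A).trace
      + (∑ i, c i * ((Dε ^ 2 * absDiagSq (R i * (R k * Ψ⁻¹))).trace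
          + (Dε ^ 2 * diagPart (entrywiseAbsSq (R k * Ψ⁻¹) * Dε ^ 2 *
              entrywiseAbsSq (R i))).trace))
      + (((∑ i, ((p i : ℝ) : ℂ) • R i) + ((σ2 : ℝ) : ℂ) • (1 : Matrix (Fin M) (Fin M) ℂ)
          + ∑ i, ((p i : ℝ) : ℂ) • (Dε ^ 2 * diagPart (R i))) * A).trace
    let xc : Fin M → ℂ := fun m => ((x m : ℝ) : ℂ)
    -- the posynomial `f_k^d(x, p)`
    let f : ℂ :=
      (∑ m, (((p k : ℝ) : ℂ) * (((‖A m m‖) ^ 2 : ℝ) : ℂ)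
        + ∑ i, (c i * (((‖(R i * (R k * Ψ⁻¹)) m m‖) ^ 2 : ℝ) : ℂ)
            + ((p i : ℝ) : ℂ) * (R i) m m * A m m)) * xc m)
      + xc ⬝ᵥ ((∑ i, c i • Matrix.hadamard (entrywiseAbsSq (R k * Ψ⁻¹))
          (entrywiseAbsSq (R i))).mulVec xc)
      + (((∑ i, ((p i : ℝ) : ℂ) • R i) + ((σ2 : ℝ) : ℂ) • (1 : Matrix (Fin M) (Fin M) ℂ)) * A).trace
    -- the SINR numerator weight `w_k = tr(A_k)²`
    let w : ℂ := A.trace ^ 2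
    D = f ∧ ((p k : ℝ) : ℂ) * w / D = ((p k : ℝ) : ℂ) * w / f := by
  intro A Dε c D xc f w
  have hherm : ∀ i : Fin K, (R i)ᴴ = R i := fun i => (hR i).1
  have habs : ∀ (i : Fin K) (m n : Fin M),
      ‖(R i) n m‖ = ‖(R i) m n‖ := by
    intro i m n
    conv_lhs => rw [← hherm i]
    simp [Matrix.conjTranspose_apply]
  have hDε2 : Dε ^ 2 = Matrix.diagonal xc := by
    have h1 : ∀ m, xc m = ((ε m : ℝ) : ℂ) * ((ε m : ℝ) : ℂ) := by
      intro m
      show ((x m : ℝ) : ℂ) = _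
      rw [hx m]
      push_cast
      ring
    rw [show Dε = Matrix.diagonal fun m => ((ε m : ℝ) : ℂ) from rfl, pow_two,
      Matrix.diagonal_mul_diagonal]
    exact congrArg _ (funext fun m => (h1 m).symm)
  have tr_diag_mul : ∀ (d : Fin M → ℂ) (X : Matrix (Fin M) (Fin M) ℂ),
      (Matrix.diagonal d * X).trace = ∑ m, d m * X m m := by
    intro d X
    simp [Matrix.trace, Matrix.diag, Matrix.diagonal_mul]
  have hDf : D = f := by
    have hD1 : (Dε ^ 2 * absDiagSq A).trace
        = ∑ m, xc m * (((‖A m m‖) ^ 2 : ℝ) : ℂ) := by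
      rw [hDε2, tr_diag_mul]
      simp [absDiagSq]
    have hD2a : ∀ i : Fin K, (Dε ^ 2 * absDiagSq (R i * (R k * Ψ⁻¹))).trace
        = ∑ m, xc m * (((‖(R i * (R k * Ψ⁻¹)) m m‖) ^ 2 : ℝ) : ℂ) := by
      intro i
      rw [hDε2, tr_diag_mul]
      simp [absDiagSq]
    have hFsym : ∀ (i : Fin K) (m n : Fin M),
        entrywiseAbsSq (R i) n m = entrywiseAbsSq (R i) m n := by
      intro i m n
      simp only [entrywiseAbsSq, Matrix.of_apply, habs i m n]
    have hD2b : ∀ i : Fin K,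
        (Dε ^ 2 * diagPart (entrywiseAbsSq (R k * Ψ⁻¹) * Dε ^ 2 *
            entrywiseAbsSq (R i))).trace
        = ∑ m, ∑ n, xc m * entrywiseAbsSq (R k * Ψ⁻¹) m n *
            entrywiseAbsSq (R i) m n * xc n := by
      intro i
      rw [hDε2, tr_diag_mul]
      refine Finset.sum_congr rfl fun m _ => ?_
      simp only [diagPart, Matrix.diagonal_apply_eq]
      rw [Matrix.mul_apply]
      simp only [Matrix.mul_diagonal, Finset.mul_sum]
      refine Finset.sum_congr rfl fun n _ => ?_
      rw [hFsym i m n]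
      ring
    have hD3 : ∀ i : Fin K, ((Dε ^ 2 * diagPart (R i)) * A).trace
        = ∑ m, xc m * (R i m m * A m m) := by
      intro i
      rw [hDε2, show diagPart (R i) = Matrix.diagonal (fun m => R i m m) from rfl,
        Matrix.diagonal_mul_diagonal, tr_diag_mul]
      exact Finset.sum_congr rfl fun m _ => by ring
    have hfQ : xc ⬝ᵥ ((∑ i, c i • Matrix.hadamard (entrywiseAbsSq (R k * Ψ⁻¹))
          (entrywiseAbsSq (R i))).mulVec xc)
        = ∑ i, c i * ∑ m, ∑ n, xc m * entrywiseAbsSq (R k * Ψ⁻¹) m n *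
            entrywiseAbsSq (R i) m n * xc n := by
      have step : xc ⬝ᵥ ((∑ i, c i • Matrix.hadamard (entrywiseAbsSq (R k * Ψ⁻¹))
            (entrywiseAbsSq (R i))).mulVec xc)
          = ∑ m, ∑ n, ∑ i, xc m * (c i * (entrywiseAbsSq (R k * Ψ⁻¹) m n *
              entrywiseAbsSq (R i) m n) * xc n) := by
        simp only [dotProduct, Matrix.mulVec, Matrix.sum_apply, Matrix.smul_apply,
          Matrix.hadamard_apply, smul_eq_mul, Finset.mul_sum, Finset.sum_mul]
      rw [step]
      rw [show (∑ m, ∑ n, ∑ i, xc m * (c i * (entrywiseAbsSq (R k * Ψ⁻¹) m n *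
              entrywiseAbsSq (R i) m n) * xc n))
          = ∑ m, ∑ i, ∑ n, xc m * (c i * (entrywiseAbsSq (R k * Ψ⁻¹) m n *
              entrywiseAbsSq (R i) m n) * xc n)
        from Finset.sum_congr rfl fun m _ => Finset.sum_comm, Finset.sum_comm]
      refine Finset.sum_congr rfl fun i _ => ?_
      rw [Finset.mul_sum]
      refine Finset.sum_congr rfl fun m _ => ?_
      rw [Finset.mul_sum]
      exact Finset.sum_congr rfl fun n _ => by ring
    have hfL : (∑ m, (((p k : ℝ) : ℂ) * (((‖A m m‖) ^ 2 : ℝ) : ℂ)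
          + ∑ i, (c i * (((‖(R i * (R k * Ψ⁻¹)) m m‖) ^ 2 : ℝ) : ℂ)
              + ((p i : ℝ) : ℂ) * (R i) m m * A m m)) * xc m)
        = ((p k : ℝ) : ℂ) * (∑ m, xc m * (((‖A m m‖) ^ 2 : ℝ) : ℂ))
          + (∑ i, c i * ∑ m, xc m * (((‖(R i * (R k * Ψ⁻¹)) m m‖) ^ 2 : ℝ) : ℂ)
          + ∑ i, ((p i : ℝ) : ℂ) * ∑ m, xc m * (R i m m * A m m)) := by
      have e1 : (∑ m, (((p k : ℝ) : ℂ) * (((‖A m m‖) ^ 2 : ℝ) : ℂ)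
            + ∑ i, (c i * (((‖(R i * (R k * Ψ⁻¹)) m m‖) ^ 2 : ℝ) : ℂ)
                + ((p i : ℝ) : ℂ) * (R i) m m * A m m)) * xc m)
          = (∑ m, ((p k : ℝ) : ℂ) * (((‖A m m‖) ^ 2 : ℝ) : ℂ) * xc m)
            + ∑ m, (∑ i, (c i * (((‖(R i * (R k * Ψ⁻¹)) m m‖) ^ 2 : ℝ) : ℂ)
                + ((p i : ℝ) : ℂ) * (R i) m m * A m m)) * xc m := by
        rw [← Finset.sum_add_distrib]
        exact Finset.sum_congr rfl fun m _ => by rw [add_mul]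
      rw [e1]
      congr 1
      · rw [Finset.mul_sum]
        exact Finset.sum_congr rfl fun m _ => by ring
      · calc (∑ m, (∑ i, (c i * (((‖(R i * (R k * Ψ⁻¹)) m m‖) ^ 2 : ℝ) : ℂ)
                + ((p i : ℝ) : ℂ) * (R i) m m * A m m)) * xc m)
            = ∑ m, ∑ i, (c i * (((‖(R i * (R k * Ψ⁻¹)) m m‖) ^ 2 : ℝ) : ℂ)
                + ((p i : ℝ) : ℂ) * (R i) m m * A m m) * xc m := by
              exact Finset.sum_congr rfl fun m _ => Finset.sum_mul ..
          _ = ∑ i, ∑ m, (c i * (((‖(R i * (R k * Ψ⁻¹)) m m‖) ^ 2 : ℝ) : ℂ)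
                + ((p i : ℝ) : ℂ) * (R i) m m * A m m) * xc m := Finset.sum_comm
          _ = ∑ i, (c i * ∑ m, xc m * (((‖(R i * (R k * Ψ⁻¹)) m m‖) ^ 2 : ℝ) : ℂ)
                + ((p i : ℝ) : ℂ) * ∑ m, xc m * (R i m m * A m m)) := by
              refine Finset.sum_congr rfl fun i _ => ?_
              rw [Finset.mul_sum, Finset.mul_sum, ← Finset.sum_add_distrib]
              exact Finset.sum_congr rfl fun m _ => by ring
          _ = _ := Finset.sum_add_distrib
    have hDdef : D = ((p k : ℝ) : ℂ) * (Dε ^ 2 * absDiagSq A).trace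
      + (∑ i, c i * ((Dε ^ 2 * absDiagSq (R i * (R k * Ψ⁻¹))).trace
          + (Dε ^ 2 * diagPart (entrywiseAbsSq (R k * Ψ⁻¹) * Dε ^ 2 *
              entrywiseAbsSq (R i))).trace))
      + (((∑ i, ((p i : ℝ) : ℂ) • R i) + ((σ2 : ℝ) : ℂ) • (1 : Matrix (Fin M) (Fin M) ℂ)
          + ∑ i, ((p i : ℝ) : ℂ) • (Dε ^ 2 * diagPart (R i))) * A).trace := rfl
    have hfdef : f = (∑ m, (((p k : ℝ) : ℂ) * (((‖A m m‖) ^ 2 : ℝ) : ℂ)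
        + ∑ i, (c i * (((‖(R i * (R k * Ψ⁻¹)) m m‖) ^ 2 : ℝ) : ℂ)
            + ((p i : ℝ) : ℂ) * (R i) m m * A m m)) * xc m)
      + xc ⬝ᵥ ((∑ i, c i • Matrix.hadamard (entrywiseAbsSq (R k * Ψ⁻¹))
          (entrywiseAbsSq (R i))).mulVec xc)
      + (((∑ i, ((p i : ℝ) : ℂ) • R i) + ((σ2 : ℝ) : ℂ) • (1 : Matrix (Fin M) (Fin M) ℂ)) * A).trace := rfl
    rw [hDdef, hfdef, hD1, hfL, hfQ]
    rw [Matrix.add_mul, Matrix.trace_add, Matrix.sum_mul, Matrix.trace_sum]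
    simp only [Matrix.smul_mul, Matrix.trace_smul, smul_eq_mul, hD3, hD2a, hD2b,
      mul_add, Finset.sum_add_distrib]
    ring
  exact ⟨hDf, by rw [hDf]⟩
end
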